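/- arXiv:2205.06543 — 3 statements merged into one kernel-verified Lean document; each statement's English description precedes it below -/
import Mathlib

section
/- Let d ≥ 1 and p ≥ 0 be integers and let γ ∈ (0,1]. There exists a constant C = C(d,p,γ) such that for every h > 0, every axis-parallel closed cube T ⊂ ℝ^d of side length h, every Lebesgue-measurable subset ω ⊆ T with |ω| ≥ γ h^d, and every polynomial q on ℝ^d of degree at most p in each variable, one has ∫_T q(x)² dx ≤ C ∫_ω q(x)² dx. -/
open MeasureTheory

noncomputable section

/-- The axis-parallel closed cube in `ℝ^d` with lower corner `a` and side length `h`. -/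
def cube (d : ℕ) (h : ℝ) (a : EuclideanSpace ℝ (Fin d)) : Set (EuclideanSpace ℝ (Fin d)) :=
  {x | ∀ i, a i ≤ x i ∧ x i ≤ a i + h}

/-- `q : ℝ^d → ℝ` is a polynomial function of degree at most `p` in each variable. -/
def IsQp (d p : ℕ) (q : EuclideanSpace ℝ (Fin d) → ℝ) : Prop :=
  ∃ P : MvPolynomial (Fin d) ℝ, (∀ i, P.degreeOf i ≤ p) ∧
    ∀ x : EuclideanSpace ℝ (Fin d), q x = MvPolynomial.eval (fun i => x i) P

lemma null_zero_set : ∀ (n : ℕ) (P : MvPolynomial (Fin n) ℝ), P ≠ 0 →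
    (volume : Measure (Fin n → ℝ)) {x | MvPolynomial.eval x P = 0} = 0 := by
  intro n
  induction n with
  | zero =>
    intro P hP
    obtain ⟨c, rfl⟩ := MvPolynomial.C_surjective (Fin 0) P
    have hc : c ≠ 0 := fun h => hP (by simp [h])
    convert measure_empty
    · ext x; simp [hc]
    · infer_instance
  | succ n ih =>
    intro P hP
    set Q : Polynomial (MvPolynomial (Fin n) ℝ) := MvPolynomial.finSuccEquiv ℝ n P with hQdef
    have hQ0 : Q ≠ 0 := by
      simp only [hQdef, ne_eq, EmbeddingLike.map_eq_zero_iff]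
      exact hP
    obtain ⟨i, hi⟩ : ∃ i, Q.coeff i ≠ 0 := by
      by_contra hcon
      push_neg at hcon
      exact hQ0 (Polynomial.ext fun k => by simp [hcon k])
    set Z : Set (Fin (n+1) → ℝ) := {x | MvPolynomial.eval x P = 0} with hZdef
    have hZm : MeasurableSet Z :=
      (isClosed_eq (MvPolynomial.continuous_eval P) continuous_const).measurableSet
    set e := MeasurableEquiv.piFinSuccAbove (fun _ : Fin (n+1) => ℝ) 0 with hedef
    have hmp := measurePreserving_piFinSuccAbove (fun _ : Fin (n+1) => (volume : Measure ℝ)) 0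
    have hsymm : ∀ y : ℝ, ∀ s : Fin n → ℝ, e.symm (y, s) = Fin.cons y s := by
      intro y s
      simp [hedef, MeasurableEquiv.piFinSuccAbove, Fin.insertNthEquiv_zero]
      rfl
    set T : Set (ℝ × (Fin n → ℝ)) := e.symm ⁻¹' Z with hTdef
    have hTm : MeasurableSet T := e.symm.measurable hZm
    have h1 : (volume : Measure (Fin (n+1) → ℝ)) Z =
        ((volume : Measure ℝ).prod (Measure.pi fun _ : Fin n => volume)) T := by
      have := hmp.measure_preimage hTm.nullMeasurableSet
      have hpre : e ⁻¹' T = Z := by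
        ext x; simp [hTdef]
      rw [hpre] at this
      rw [volume_pi, this]
    rw [h1]
    have h2 : ((volume : Measure ℝ).prod (Measure.pi fun _ : Fin n => volume)) T
        = ((Measure.pi fun _ : Fin n => (volume : Measure ℝ)).prod volume) (Prod.swap ⁻¹' T) := by
      rw [← Measure.prod_swap, Measure.map_apply measurable_swap hTm]
    rw [h2, Measure.measure_prod_null (measurable_swap hTm)]
    have hN := ih (Q.coeff i) hi
    rw [← volume_pi]
    filter_upwards [measure_eq_zero_iff_ae_notMem.mp hN] with s hs
    have hmap : Q.map (MvPolynomial.eval s) ≠ 0 := by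
      intro hcon
      apply hs
      have := Polynomial.coeff_map (MvPolynomial.eval s) i (p := Q)
      rw [hcon] at this
      simpa using this.symm
    have hsub : (Prod.mk s ⁻¹' (Prod.swap ⁻¹' T)) ⊆ {y : ℝ | (Q.map (MvPolynomial.eval s)).IsRoot y} := by
      intro y hy
      have hy' : MvPolynomial.eval (e.symm (y, s)) P = 0 := hy
      rw [hsymm y s, MvPolynomial.eval_eq_eval_mv_eval'] at hy'
      exact hy'
    exact measure_mono_null hsub ((Polynomial.finite_setOf_isRoot hmap).measure_zero _)


lemma null_zero_set_E (d : ℕ) (P : MvPolynomial (Fin d) ℝ) (hP : P ≠ 0) :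
    volume {x : EuclideanSpace ℝ (Fin d) | MvPolynomial.eval (fun i => x i) P = 0} = 0 := by
  have hmp := EuclideanSpace.volume_preserving_symm_measurableEquiv_toLp (ι := Fin d)
  set Z : Set (Fin d → ℝ) := {x | MvPolynomial.eval x P = 0} with hZ
  have hZm : MeasurableSet Z :=
    (isClosed_eq (MvPolynomial.continuous_eval P) continuous_const).measurableSet
  have h := hmp.measure_preimage hZm.nullMeasurableSet
  have hpre : (MeasurableEquiv.toLp 2 (Fin d → ℝ)).symm ⁻¹' Z
      = {x : EuclideanSpace ℝ (Fin d) | MvPolynomial.eval (fun i => x i) P = 0} := rfl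
  rw [hpre] at h
  rw [h]
  exact null_zero_set d P hP

section Repr

variable {d p : ℕ}

/-- exponent function to finsupp -/
def fsupp (p : ℕ) (α : Fin d → Fin (p+1)) : Fin d →₀ ℕ :=
  Finsupp.equivFunOnFinite.symm (fun i => (α i : ℕ))

lemma fsupp_apply (α : Fin d → Fin (p+1)) (i : Fin d) : fsupp p α i = (α i : ℕ) := rfl

lemma fsupp_injective : Function.Injective (fsupp (d := d) p) := by
  intro α β h
  funext i
  have := congrFun (congrArg (fun f : Fin d →₀ ℕ => (f : Fin d → ℕ)) h) i
  simpa [fsupp_apply, Fin.val_eq_val] using this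

lemma isQp_repr {q : EuclideanSpace ℝ (Fin d) → ℝ} (hq : IsQp d p q) :
    ∃ c : (Fin d → Fin (p+1)) → ℝ, ∀ x : EuclideanSpace ℝ (Fin d),
      q x = ∑ α : Fin d → Fin (p+1), c α * ∏ i, x i ^ (α i : ℕ) := by
  classical
  obtain ⟨P, hdeg, hqP⟩ := hq
  refine ⟨fun α => P.coeff (fsupp p α), fun x => ?_⟩
  rw [hqP, MvPolynomial.eval_eq']
  have hsub : P.support ⊆ Finset.univ.image (fsupp (d := d) p) := by
    intro m hm
    have hle : ∀ i, m i ≤ p := fun i => le_trans (MvPolynomial.monomial_le_degreeOf i hm) (hdeg i)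
    refine Finset.mem_image.2 ⟨fun i => ⟨m i, Nat.lt_succ_of_le (hle i)⟩, Finset.mem_univ _, ?_⟩
    ext i
    simp [fsupp_apply]
  rw [Finset.sum_subset hsub (fun m _ hm => by
    rw [MvPolynomial.notMem_support_iff.1 hm, zero_mul])]
  rw [Finset.sum_image (fun a _ b _ h => fsupp_injective h)]
  rfl

/-- the polynomial with coefficient vector c -/
def polyOf (d p : ℕ) (c : (Fin d → Fin (p+1)) → ℝ) : MvPolynomial (Fin d) ℝ :=
  ∑ α : Fin d → Fin (p+1), MvPolynomial.monomial (fsupp p α) (c α)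

lemma eval_polyOf (c : (Fin d → Fin (p+1)) → ℝ) (x : EuclideanSpace ℝ (Fin d)) :
    MvPolynomial.eval (fun i => x i) (polyOf d p c)
      = ∑ α : Fin d → Fin (p+1), c α * ∏ i, x i ^ (α i : ℕ) := by
  rw [polyOf, map_sum]
  refine Finset.sum_congr rfl fun α _ => ?_
  rw [MvPolynomial.eval_monomial]
  congr 1
  rw [Finsupp.prod_fintype _ _ (fun i => pow_zero _)]
  rfl

lemma polyOf_ne_zero {c : (Fin d → Fin (p+1)) → ℝ} (hc : c ≠ 0) : polyOf d p c ≠ 0 := by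
  classical
  obtain ⟨β, hβ⟩ := Function.ne_iff.1 hc
  intro hcon
  apply hβ
  have : MvPolynomial.coeff (fsupp p β) (polyOf d p c) = c β := by
    rw [polyOf, MvPolynomial.coeff_sum]
    have : ∀ α : Fin d → Fin (p+1),
        MvPolynomial.coeff (fsupp p β) (MvPolynomial.monomial (fsupp p α) (c α))
          = if α = β then c α else 0 := by
      intro α
      rw [MvPolynomial.coeff_monomial]
      congr 1
      simp only [eq_iff_iff]
      exact ⟨fun h => fsupp_injective h, fun h => by rw [h]⟩
    simp_rw [this]
    simp
  rw [hcon] at this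
  simpa using this.symm

lemma cube_isClosed (d : ℕ) (h : ℝ) (a : EuclideanSpace ℝ (Fin d)) : IsClosed (cube d h a) := by
  have : cube d h a = ⋂ i, (EuclideanSpace.proj (𝕜 := ℝ) i) ⁻¹' (Set.Icc (a i) (a i + h)) := by
    ext x
    simp [cube, Set.mem_iInter, Set.mem_Icc, EuclideanSpace.proj]
  rw [this]
  exact isClosed_iInter fun i => IsClosed.preimage (EuclideanSpace.proj i).continuous isClosed_Icc

lemma cube_isCompact (d : ℕ) {h : ℝ} (hh : 0 ≤ h) (a : EuclideanSpace ℝ (Fin d)) :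
    IsCompact (cube d h a) := by
  refine Metric.isCompact_of_isClosed_isBounded (cube_isClosed d h a) ?_
  refine (Metric.isBounded_closedBall (x := a) (r := Real.sqrt (d * h ^ 2))).subset ?_
  intro x hx
  rw [Metric.mem_closedBall, EuclideanSpace.dist_eq]
  refine Real.sqrt_le_sqrt ?_
  calc ∑ i, dist (x i) (a i) ^ 2 ≤ ∑ _i : Fin d, h ^ 2 := by
        refine Finset.sum_le_sum fun i _ => ?_
        have h1 : dist (x i) (a i) ≤ h := by
          rw [Real.dist_eq, abs_le]
          have := hx i
          constructor <;> linarith [this.1, this.2]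
        exact pow_le_pow_left₀ dist_nonneg h1 2
    _ = d * h ^ 2 := by simp [Finset.sum_const, nsmul_eq_mul]


lemma unit_cube (d p : ℕ) {γ : ℝ} (hγ : 0 < γ) :
    ∃ C : ℝ, 0 < C ∧ ∀ ω : Set (EuclideanSpace ℝ (Fin d)), MeasurableSet ω → ω ⊆ cube d 1 0 →
      ENNReal.ofReal γ ≤ volume ω → ∀ q, IsQp d p q →
      ∫ x in cube d 1 0, q x ^ 2 ≤ C * ∫ x in ω, q x ^ 2 := by
  classical
  set T : Set (EuclideanSpace ℝ (Fin d)) := cube d 1 0 with hT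
  have hTc : IsCompact T := cube_isCompact d zero_le_one 0
  have hTm : MeasurableSet T := (cube_isClosed d 1 0).measurableSet
  have hTfin : volume T ≠ ⊤ := hTc.measure_lt_top.ne
  set n : ℝ := (Fintype.card (Fin d → Fin (p+1)) : ℝ) with hn
  have hn0 : 0 < n := by
    rw [hn]
    exact_mod_cast Fintype.card_pos
  set Q : ((Fin d → Fin (p+1)) → ℝ) → EuclideanSpace ℝ (Fin d) → ℝ :=
    fun c x => ∑ α : Fin d → Fin (p+1), c α * ∏ i, x i ^ (α i : ℕ) with hQ
  have hQcont : ∀ c, Continuous (Q c) := by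
    intro c
    refine continuous_finset_sum _ fun α _ => Continuous.mul continuous_const ?_
    exact continuous_finset_prod _ fun i _ =>
      ((EuclideanSpace.proj (𝕜 := ℝ) i).continuous.pow _)
  have hQint : ∀ c (s : Set (EuclideanSpace ℝ (Fin d))), s ⊆ T →
      IntegrableOn (fun x => Q c x ^ 2) s volume := fun c s hs =>
    ((((hQcont c).pow 2).continuousOn).integrableOn_compact hTc).mono_set hs
  -- pointwise bounds on the unit cube
  have hx01 : ∀ x ∈ T, ∀ i, 0 ≤ x i ∧ x i ≤ 1 := by
    intro x hx i
    have := hx i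
    simpa using this
  have hprod : ∀ x ∈ T, ∀ α : Fin d → Fin (p+1),
      0 ≤ (∏ i, x i ^ (α i : ℕ)) ∧ (∏ i, x i ^ (α i : ℕ)) ≤ 1 := by
    intro x hx α
    constructor
    · exact Finset.prod_nonneg fun i _ => pow_nonneg (hx01 x hx i).1 _
    · exact Finset.prod_le_one (fun i _ => pow_nonneg (hx01 x hx i).1 _)
        (fun i _ => pow_le_one₀ (hx01 x hx i).1 (hx01 x hx i).2)
  have habs : ∀ c, ∀ x ∈ T, |Q c x| ≤ n * ‖c‖ := by
    intro c x hx
    calc |Q c x| ≤ ∑ α : Fin d → Fin (p+1), |c α * ∏ i, x i ^ (α i : ℕ)| :=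
          Finset.abs_sum_le_sum_abs _ _
      _ ≤ ∑ _α : Fin d → Fin (p+1), ‖c‖ := by
          refine Finset.sum_le_sum fun α _ => ?_
          rw [abs_mul]
          have h1 : |c α| ≤ ‖c‖ := by
            have := norm_le_pi_norm c α
            simpa using this
          have h2 : |∏ i, x i ^ (α i : ℕ)| ≤ 1 := by
            rw [abs_of_nonneg (hprod x hx α).1]; exact (hprod x hx α).2
          calc |c α| * |∏ i, x i ^ (α i : ℕ)| ≤ |c α| * 1 :=
                mul_le_mul_of_nonneg_left h2 (abs_nonneg _)
            _ ≤ ‖c‖ := by rw [mul_one]; exact h1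
      _ = n * ‖c‖ := by rw [Finset.sum_const, Finset.card_univ, nsmul_eq_mul]
  have hsub : ∀ c c' x, Q c x - Q c' x = Q (c - c') x := by
    intro c c' x
    simp only [hQ, Pi.sub_apply, sub_mul, Finset.sum_sub_distrib]
  have hdiffsq : ∀ c c', ∀ x ∈ T,
      |Q c x ^ 2 - Q c' x ^ 2| ≤ (n * ‖c‖ + n * ‖c'‖) * (n * ‖c - c'‖) := by
    intro c c' x hx
    have h1 : Q c x ^ 2 - Q c' x ^ 2 = (Q c x + Q c' x) * (Q c x - Q c' x) := by ring
    rw [h1, abs_mul, hsub]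
    refine mul_le_mul ?_ (habs _ x hx) (abs_nonneg _) ?_
    · calc |Q c x + Q c' x| ≤ |Q c x| + |Q c' x| := abs_add_le _ _
        _ ≤ n * ‖c‖ + n * ‖c'‖ := add_le_add (habs _ x hx) (habs _ x hx)
    · positivity
  -- Claim A
  have claimA : ∀ c : (Fin d → Fin (p+1)) → ℝ, ∃ δ : ℝ, ∃ ε : ℝ, 0 < δ ∧ 0 < ε ∧
      (‖c‖ = 1 → ∀ c', ‖c' - c‖ < δ → ∀ ω, MeasurableSet ω → ω ⊆ T →
        ENNReal.ofReal γ ≤ volume ω → ε ≤ ∫ x in ω, Q c' x ^ 2) := by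
    intro c
    by_cases hc : ‖c‖ = 1
    swap
    · exact ⟨1, 1, one_pos, one_pos, fun h => absurd h hc⟩
    have hc0 : c ≠ 0 := by
      intro h
      rw [h] at hc
      simp at hc
    have hQeval : ∀ x : EuclideanSpace ℝ (Fin d),
        Q c x = MvPolynomial.eval (fun i => x i) (polyOf d p c) := fun x =>
      (eval_polyOf c x).symm
    have hZ : volume {x : EuclideanSpace ℝ (Fin d) |
        MvPolynomial.eval (fun i => x i) (polyOf d p c) = 0} = 0 :=
      null_zero_set_E d _ (polyOf_ne_zero hc0)
    set A : ℕ → Set (EuclideanSpace ℝ (Fin d)) :=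
      fun k => {x ∈ T | Q c x ^ 2 ≤ 1 / (k + 1)} with hA
    have hAclosed : ∀ k, IsClosed (A k) := by
      intro k
      have : A k = T ∩ {x | Q c x ^ 2 ≤ 1 / (k + 1)} := rfl
      rw [this]
      exact (cube_isClosed d 1 0).inter (isClosed_le ((hQcont c).pow 2) continuous_const)
    have hAanti : Antitone A := by
      intro k l hkl x hx
      refine ⟨hx.1, le_trans hx.2 ?_⟩
      apply one_div_le_one_div_of_le
      · positivity
      · exact_mod_cast add_le_add_left (Nat.cast_le.2 hkl) 1
    have hAfin : volume (A 0) ≠ ⊤ :=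
      ((measure_mono (fun x hx => hx.1)).trans_lt hTc.measure_lt_top).ne
    have hiInter : (⋂ k, A k) ⊆ {x : EuclideanSpace ℝ (Fin d) |
        MvPolynomial.eval (fun i => x i) (polyOf d p c) = 0} := by
      intro x hx
      have hxall : ∀ k : ℕ, Q c x ^ 2 ≤ 1 / (k + 1) := fun k => (Set.mem_iInter.1 hx k).2
      have hzero : Q c x ^ 2 ≤ 0 := by
        by_contra hcon
        push_neg at hcon
        obtain ⟨k, hk⟩ := exists_nat_one_div_lt hcon
        exact absurd (hxall k) (by push_neg; exact_mod_cast hk)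
      have hq0 : Q c x = 0 := by nlinarith [sq_nonneg (Q c x)]
      exact (hQeval x).symm.trans hq0
    have htend := tendsto_measure_iInter_atTop
      (fun k => (hAclosed k).measurableSet.nullMeasurableSet) hAanti ⟨0, hAfin⟩
    rw [measure_mono_null hiInter hZ] at htend
    have hev : ∀ᶠ k in Filter.atTop, volume (A k) < ENNReal.ofReal (γ / 2) :=
      htend.eventually_lt_const (by simp [ENNReal.ofReal_pos]; positivity)
    obtain ⟨k, hk⟩ := hev.exists
    set ε₀ : ℝ := 1 / (k + 1) with hε₀
    have hε₀pos : 0 < ε₀ := by positivity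
    set δ : ℝ := min 1 (ε₀ / (2 * (3 * n ^ 2 + 1))) with hδ
    have hδpos : 0 < δ := by positivity
    refine ⟨δ, ε₀ / 2 * (γ / 2), hδpos, by positivity, fun _ c' hc' ω hωm hωT hωγ => ?_⟩
    have hc'n : ‖c'‖ ≤ 2 := by
      calc ‖c'‖ = ‖(c' - c) + c‖ := by ring_nf
        _ ≤ ‖c' - c‖ + ‖c‖ := norm_add_le _ _
        _ ≤ 1 + 1 := add_le_add (le_trans hc'.le (min_le_left _ _)) hc.le
        _ = 2 := by norm_num
    have hlow : ∀ x ∈ ω \ A k, ε₀ / 2 ≤ Q c' x ^ 2 := by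
      intro x hx
      have hxT : x ∈ T := hωT hx.1
      have hxA : ¬ (Q c x ^ 2 ≤ ε₀) := fun hcon => hx.2 ⟨hxT, hcon⟩
      push_neg at hxA
      have hd := hdiffsq c' c x hxT
      have hd2 : (n * ‖c'‖ + n * ‖c‖) * (n * ‖c' - c‖) ≤ ε₀ / 2 := by
        have h1 : n * ‖c'‖ + n * ‖c‖ ≤ 3 * n := by
          rw [hc]
          nlinarith
        have h2 : ‖c' - c‖ ≤ ε₀ / (2 * (3 * n ^ 2 + 1)) := le_trans hc'.le (min_le_right _ _)
        have h3 : (n * ‖c'‖ + n * ‖c‖) * (n * ‖c' - c‖) ≤ 3 * n * (n * (ε₀ / (2 * (3 * n ^ 2 + 1)))) := by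
          refine mul_le_mul h1 (mul_le_mul_of_nonneg_left h2 hn0.le) (by positivity) (by positivity)
        refine h3.trans ?_
        have heq : 3 * n * (n * (ε₀ / (2 * (3 * n ^ 2 + 1)))) = ε₀ * (3 * n ^ 2) / (2 * (3 * n ^ 2 + 1)) := by
          ring
        rw [heq, div_le_div_iff₀ (by positivity) (by norm_num : (0:ℝ) < 2)]
        nlinarith [hε₀pos.le, sq_nonneg n]
      have habs' := abs_le.1 (hd.trans hd2)
      linarith [habs'.1]
    have hωA : ENNReal.ofReal (γ / 2) ≤ volume (ω \ A k) := by
      have h1 : volume ω ≤ volume (ω \ A k) + volume (A k) :=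
        le_trans (measure_mono (fun x hx => by
          by_cases hxA : x ∈ A k
          · exact Set.mem_union_right _ hxA
          · exact Set.mem_union_left _ ⟨hx, hxA⟩)) (measure_union_le _ _)
      have h2 : ENNReal.ofReal γ ≤ volume (ω \ A k) + ENNReal.ofReal (γ / 2) :=
        hωγ.trans (h1.trans (add_le_add_right hk.le _))
      have h3 : ENNReal.ofReal γ = ENNReal.ofReal (γ / 2) + ENNReal.ofReal (γ / 2) := by
        rw [← ENNReal.ofReal_add (by positivity) (by positivity), add_halves]
      rw [h3] at h2
      exact (ENNReal.add_le_add_iff_right ENNReal.ofReal_ne_top).1 h2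
    have hfin : volume (ω \ A k) ≠ ⊤ :=
      ((measure_mono (fun x hx => hωT hx.1)).trans_lt hTc.measure_lt_top).ne
    have hγ2 : γ / 2 ≤ (volume (ω \ A k)).toReal :=
      (ENNReal.ofReal_le_iff_le_toReal hfin).1 hωA
    calc ε₀ / 2 * (γ / 2) ≤ ε₀ / 2 * (volume (ω \ A k)).toReal :=
          mul_le_mul_of_nonneg_left hγ2 (by positivity)
      _ ≤ ∫ x in ω \ A k, Q c' x ^ 2 :=
          setIntegral_ge_of_const_le_real (hωm.diff (hAclosed k).measurableSet) hfin hlow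
            (hQint c' _ (fun x hx => hωT hx.1))
      _ ≤ ∫ x in ω, Q c' x ^ 2 := by
          refine setIntegral_mono_set (hQint c' ω hωT) ?_ (HasSubset.Subset.eventuallyLE Set.diff_subset)
          filter_upwards with x using sq_nonneg _
  -- finite subcover of the unit sphere
  choose δf εf hδf hεf hkey using claimA
  set Sp : Set ((Fin d → Fin (p+1)) → ℝ) := Metric.sphere 0 1 with hSp
  have hSpc : IsCompact Sp := isCompact_sphere 0 1
  have hcover : Sp ⊆ ⋃ c ∈ Sp, Metric.ball c (δf c) := fun c hc =>
    Set.mem_biUnion hc (Metric.mem_ball_self (hδf c))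
  obtain ⟨t, hts, htf, htcov⟩ :=
    hSpc.elim_finite_subcover_image (fun c _ => Metric.isOpen_ball) hcover
  have hSpne : Sp.Nonempty := NormedSpace.sphere_nonempty.mpr zero_le_one
  have htne : t.Nonempty := by
    obtain ⟨c, hc⟩ := hSpne
    obtain ⟨c₀, hc₀, -⟩ := Set.mem_iUnion₂.1 (htcov hc)
    exact ⟨c₀, hc₀⟩
  set ε : ℝ := htf.toFinset.inf' ((Set.Finite.toFinset_nonempty htf).mpr htne) εf with hε
  have hεpos : 0 < ε := by
    rw [hε, Finset.lt_inf'_iff]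
    exact fun c _ => hεf c
  have hgood : ∀ c, ‖c‖ = 1 → ∀ ω, MeasurableSet ω → ω ⊆ T →
      ENNReal.ofReal γ ≤ volume ω → ε ≤ ∫ x in ω, Q c x ^ 2 := by
    intro c hc ω hωm hωT hωγ
    have hcSp : c ∈ Sp := by
      rw [hSp, mem_sphere_zero_iff_norm]
      exact hc
    obtain ⟨c₀, hc₀t, hcball⟩ := Set.mem_iUnion₂.1 (htcov hcSp)
    have hc₀n : ‖c₀‖ = 1 := mem_sphere_zero_iff_norm.1 (hts hc₀t)
    have h1 : ε ≤ εf c₀ := Finset.inf'_le _ ((Set.Finite.mem_toFinset htf).2 hc₀t)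
    refine h1.trans (hkey c₀ hc₀n c ?_ ω hωm hωT hωγ)
    rw [← dist_eq_norm]
    exact Metric.mem_ball.1 hcball
  -- assemble
  set V : ℝ := (volume T).toReal with hV
  have hV0 : 0 ≤ V := ENNReal.toReal_nonneg
  refine ⟨(n ^ 2 * V + 1) / ε, by positivity, ?_⟩
  intro ω hωm hωT hωγ q hq
  obtain ⟨c, hqc⟩ := isQp_repr hq
  have hrw2 : (fun x => q x ^ 2) = fun x => Q c x ^ 2 := funext fun x => by rw [hqc x]
  simp only [hrw2]
  by_cases hc0 : c = 0
  · subst hc0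
    have : (fun x : EuclideanSpace ℝ (Fin d) => Q 0 x ^ 2) = fun _ => (0:ℝ) := by
      funext x
      simp [hQ]
    rw [this]
    simp
  · set u : (Fin d → Fin (p+1)) → ℝ := ‖c‖⁻¹ • c with hu
    have hcn0 : ‖c‖ ≠ 0 := norm_ne_zero_iff.2 hc0
    have hun : ‖u‖ = 1 := by
      rw [hu, norm_smul, norm_inv, norm_norm, inv_mul_cancel₀ hcn0]
    have hcu : ∀ x, Q c x = ‖c‖ * Q u x := by
      intro x
      have : ∀ α : Fin d → Fin (p+1), u α = ‖c‖⁻¹ * c α := fun α => rfl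
      simp only [hQ, this, Finset.mul_sum]
      refine Finset.sum_congr rfl fun α _ => ?_
      field_simp
    have hsq : ∀ x, Q c x ^ 2 = ‖c‖ ^ 2 * Q u x ^ 2 := fun x => by rw [hcu x]; ring
    simp only [hsq]
    rw [integral_const_mul, integral_const_mul]
    have hup : ∫ x in T, Q u x ^ 2 ≤ n ^ 2 * V := by
      calc ∫ x in T, Q u x ^ 2 ≤ ∫ _x in T, n ^ 2 := by
            refine setIntegral_mono_on (hQint u T subset_rfl) ?_ hTm fun x hx => ?_
            · exact integrableOn_const hTc.measure_lt_top.ne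
            · have := habs u x hx
              rw [hun, mul_one] at this
              calc Q u x ^ 2 = |Q u x| ^ 2 := (sq_abs _).symm
                _ ≤ n ^ 2 := pow_le_pow_left₀ (abs_nonneg _) this 2
        _ = n ^ 2 * V := by
            rw [setIntegral_const, smul_eq_mul, mul_comm]
            rfl
    have hlow := hgood u hun ω hωm hωT hωγ
    have hKε : (n ^ 2 * V + 1) / ε * ε = n ^ 2 * V + 1 := div_mul_cancel₀ _ hεpos.ne'
    have hcsq : (0:ℝ) ≤ ‖c‖ ^ 2 := sq_nonneg _
    have h2 : ‖c‖ ^ 2 * ∫ x in T, Q u x ^ 2 ≤ ‖c‖ ^ 2 * (n ^ 2 * V + 1) :=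
      mul_le_mul_of_nonneg_left (hup.trans (by linarith)) hcsq
    have h3 : ‖c‖ ^ 2 * ε ≤ ‖c‖ ^ 2 * ∫ x in ω, Q u x ^ 2 :=
      mul_le_mul_of_nonneg_left hlow hcsq
    have hK0 : 0 ≤ (n ^ 2 * V + 1) / ε := by positivity
    calc ‖c‖ ^ 2 * ∫ x in T, Q u x ^ 2 ≤ ‖c‖ ^ 2 * (n ^ 2 * V + 1) := h2
      _ = (n ^ 2 * V + 1) / ε * (‖c‖ ^ 2 * ε) := by
          field_simp
      _ ≤ (n ^ 2 * V + 1) / ε * (‖c‖ ^ 2 * ∫ x in ω, Q u x ^ 2) :=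
          mul_le_mul_of_nonneg_left h3 hK0

lemma isQp_comp {d p : ℕ} {q : EuclideanSpace ℝ (Fin d) → ℝ} (hq : IsQp d p q)
    (a : EuclideanSpace ℝ (Fin d)) (h : ℝ) :
    IsQp d p (fun y => q (a + h • y)) := by
  classical
  obtain ⟨P, hdeg, hqP⟩ := hq
  set f : Fin d → MvPolynomial (Fin d) ℝ :=
    fun j => MvPolynomial.C (a j) + MvPolynomial.C h * MvPolynomial.X j with hf
  have hfdeg : ∀ i j, (f j).degreeOf i ≤ if i = j then 1 else 0 := by
    intro i j
    refine (MvPolynomial.degreeOf_add_le _ _ _).trans ?_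
    rw [MvPolynomial.degreeOf_C]
    refine max_le (Nat.zero_le _) ((MvPolynomial.degreeOf_mul_le _ _ _).trans ?_)
    rw [MvPolynomial.degreeOf_C, zero_add, MvPolynomial.degreeOf_X]
  refine ⟨MvPolynomial.bind₁ f P, ?_, ?_⟩
  · intro i
    conv_lhs => rw [P.as_sum, map_sum]
    refine (MvPolynomial.degreeOf_sum_le _ _ _).trans (Finset.sup_le fun m hm => ?_)
    rw [MvPolynomial.bind₁_monomial]
    refine (MvPolynomial.degreeOf_mul_le _ _ _).trans ?_
    rw [MvPolynomial.degreeOf_C, zero_add]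
    refine (MvPolynomial.degreeOf_prod_le _ _ _).trans ?_
    have hterm : ∀ j ∈ m.support, ((f j) ^ m j).degreeOf i ≤ m j * if i = j then 1 else 0 :=
      fun j _ => (MvPolynomial.degreeOf_pow_le _ _ _).trans
        (Nat.mul_le_mul_left _ (hfdeg i j))
    refine (Finset.sum_le_sum hterm).trans ?_
    have : ∀ j ∈ m.support, m j * (if i = j then 1 else 0) = if i = j then m j else 0 := by
      intro j _
      by_cases hij : i = j <;> simp [hij]
    rw [Finset.sum_congr rfl this, Finset.sum_ite_eq m.support i (fun j => m j)]
    by_cases him : i ∈ m.support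
    · simp only [him, if_true]
      exact le_trans (MvPolynomial.monomial_le_degreeOf i hm) (hdeg i)
    · simp only [him, if_false]
      exact Nat.zero_le _
  · intro x
    show q (a + h • x) = _
    rw [hqP (a + h • x)]
    have hbind : MvPolynomial.eval (fun i => x i) (MvPolynomial.bind₁ f P)
        = MvPolynomial.eval (fun j => MvPolynomial.eval (fun i => x i) (f j)) P :=
      MvPolynomial.eval₂Hom_bind₁ _ _ _ _
    rw [hbind]
    have harg : (fun i => (a + h • x) i) = fun j => MvPolynomial.eval (fun i => x i) (f j) := by
      funext j
      have hcoord : (a + h • x) j = a j + h * x j := rfl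
      simp [hf, hcoord]
    rw [harg]

theorem statement0 (d p : ℕ) (hd : 1 ≤ d) (γ : ℝ) (hγ : 0 < γ) (hγ1 : γ ≤ 1) :
    ∃ C : ℝ, 0 < C ∧ ∀ h : ℝ, 0 < h → ∀ a : EuclideanSpace ℝ (Fin d),
      ∀ ω : Set (EuclideanSpace ℝ (Fin d)), MeasurableSet ω → ω ⊆ cube d h a →
        ENNReal.ofReal (γ * h ^ d) ≤ volume ω →
        ∀ q : EuclideanSpace ℝ (Fin d) → ℝ, IsQp d p q →
          ∫ x in cube d h a, q x ^ 2 ≤ C * ∫ x in ω, q x ^ 2 := by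
  obtain ⟨C, hC, hunit⟩ := unit_cube d p hγ
  refine ⟨C, hC, ?_⟩
  intro h hh a ω hωm hωT hωγ q hq
  have hhd : (0:ℝ) < h ^ d := by positivity
  set φ : EuclideanSpace ℝ (Fin d) → EuclideanSpace ℝ (Fin d) := fun y => a + h • y with hφ
  have hφi : ∀ (y : EuclideanSpace ℝ (Fin d)) (i : Fin d), φ y i = a i + h * y i := fun y i => rfl
  have hφinv : ∀ z : EuclideanSpace ℝ (Fin d), φ (h⁻¹ • (z - a)) = z := by
    intro z
    rw [hφ]
    show a + h • (h⁻¹ • (z - a)) = z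
    rw [smul_smul, mul_inv_cancel₀ hh.ne', one_smul, add_sub_cancel]
  have hφsurj : Function.Surjective φ := fun z => ⟨h⁻¹ • (z - a), hφinv z⟩
  have hφinj : Function.Injective φ := by
    intro y y' hyy
    have : h • y = h • y' := by
      have := hyy
      rw [hφ] at this
      exact add_left_cancel this
    exact smul_right_injective (EuclideanSpace ℝ (Fin d)) hh.ne' this
  have hφcont : Continuous φ := continuous_const.add (continuous_id.const_smul h)
  set ω' : Set (EuclideanSpace ℝ (Fin d)) := φ ⁻¹' ω with hω'
  have hω'm : MeasurableSet ω' := hφcont.measurable hωm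
  have hω'T : ω' ⊆ cube d 1 0 := by
    intro y hy
    have hz := hωT hy
    intro i
    have := hz i
    rw [hφi y i] at this
    have h0 : (0:ℝ) ≤ y i := by nlinarith [this.1]
    have h1 : y i ≤ 1 := by nlinarith [this.2]
    constructor
    · show (0 : EuclideanSpace ℝ (Fin d)) i ≤ y i
      simpa using h0
    · show y i ≤ (0 : EuclideanSpace ℝ (Fin d)) i + 1
      simpa using h1
  have himgω : φ '' ω' = ω := Set.image_preimage_eq ω hφsurj
  have himgT : φ '' (cube d 1 0) = cube d h a := by
    ext z
    constructor
    · rintro ⟨y, hy, rfl⟩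
      intro i
      have := hy i
      have h0 : (0:ℝ) ≤ y i := by simpa using this.1
      have h1 : y i ≤ 1 := by simpa using this.2
      rw [hφi y i]
      constructor
      · nlinarith
      · nlinarith
    · intro hz
      refine ⟨h⁻¹ • (z - a), ?_, hφinv z⟩
      intro i
      have := hz i
      have hcoord : (h⁻¹ • (z - a)) i = h⁻¹ * (z i - a i) := rfl
      constructor
      · show (0 : EuclideanSpace ℝ (Fin d)) i ≤ _
        rw [hcoord]
        have : (0 : EuclideanSpace ℝ (Fin d)) i = 0 := rfl
        rw [this]
        exact mul_nonneg (inv_nonneg.2 hh.le) (sub_nonneg.2 (hz i).1)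
      · show _ ≤ (0 : EuclideanSpace ℝ (Fin d)) i + 1
        rw [hcoord]
        have h0 : (0 : EuclideanSpace ℝ (Fin d)) i = 0 := rfl
        rw [h0, zero_add]
        rw [inv_mul_le_iff₀ hh, mul_one]
        linarith [(hz i).2]
  -- volume of the preimage
  have hvol : ENNReal.ofReal γ ≤ volume ω' := by
    have hsplit : ω' = (fun y : EuclideanSpace ℝ (Fin d) => h • y) ⁻¹' ((fun z : EuclideanSpace ℝ (Fin d) => a + z) ⁻¹' ω) := rfl
    have htrans : volume ((fun z : EuclideanSpace ℝ (Fin d) => a + z) ⁻¹' ω) = volume ω := by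
      rw [measure_preimage_add]
    rw [hsplit, Measure.addHaar_preimage_smul volume hh.ne', htrans]
    have hfr : Module.finrank ℝ (EuclideanSpace ℝ (Fin d)) = d := finrank_euclideanSpace_fin
    rw [hfr]
    calc ENNReal.ofReal γ = ENNReal.ofReal (|(h ^ d)⁻¹| * (γ * h ^ d)) := by
          rw [abs_of_pos (by positivity)]
          congr 1
          field_simp
      _ = ENNReal.ofReal (|(h ^ d)⁻¹|) * ENNReal.ofReal (γ * h ^ d) :=
          ENNReal.ofReal_mul (abs_nonneg _)
      _ ≤ ENNReal.ofReal (|(h ^ d)⁻¹|) * volume ω := mul_le_mul_right hωγ _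
  -- change of variables
  have hder : ∀ (s : Set (EuclideanSpace ℝ (Fin d))), ∀ x ∈ s,
      HasFDerivWithinAt φ (h • (1 : EuclideanSpace ℝ (Fin d) →L[ℝ] EuclideanSpace ℝ (Fin d))) s x := by
    intro s x _
    have h1 : HasFDerivAt (fun y : EuclideanSpace ℝ (Fin d) => h • y) (h • (1 : EuclideanSpace ℝ (Fin d) →L[ℝ] EuclideanSpace ℝ (Fin d))) x := by
      exact (hasFDerivAt_id x).const_smul h
    exact (h1.const_add a).hasFDerivWithinAt
  have hdet : |(h • (1 : EuclideanSpace ℝ (Fin d) →L[ℝ] EuclideanSpace ℝ (Fin d))).det| = h ^ d := by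
    have h1 : (h • (1 : EuclideanSpace ℝ (Fin d) →L[ℝ] EuclideanSpace ℝ (Fin d))).det = h ^ d := by
      show LinearMap.det ((h • (1 : EuclideanSpace ℝ (Fin d) →L[ℝ] EuclideanSpace ℝ (Fin d))) : EuclideanSpace ℝ (Fin d) →ₗ[ℝ] EuclideanSpace ℝ (Fin d)) = h ^ d
      have hco : ((h • (1 : EuclideanSpace ℝ (Fin d) →L[ℝ] EuclideanSpace ℝ (Fin d))) : EuclideanSpace ℝ (Fin d) →ₗ[ℝ] EuclideanSpace ℝ (Fin d)) = h • LinearMap.id := by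
        ext y
        simp
      rw [hco, LinearMap.det_smul, finrank_euclideanSpace_fin, LinearMap.det_id, mul_one]
    rw [h1]
    exact abs_of_pos hhd
  have hcov : ∀ (s : Set (EuclideanSpace ℝ (Fin d))), MeasurableSet s → ∀ g : EuclideanSpace ℝ (Fin d) → ℝ,
      ∫ x in φ '' s, g x = ∫ y in s, h ^ d * g (φ y) := by
    intro s hs g
    rw [integral_image_eq_integral_abs_det_fderiv_smul volume hs (fun x hx => hder s x hx)
      (hφinj.injOn) g]
    refine setIntegral_congr_fun hs fun y _ => ?_
    rw [hdet]
    simp [smul_eq_mul]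
  have hqφ : IsQp d p (fun y => q (a + h • y)) := isQp_comp hq a h
  have hTm : MeasurableSet (cube d 1 0) := (cube_isClosed d 1 0).measurableSet
  have h1 : ∫ x in cube d h a, q x ^ 2 = ∫ y in cube d 1 0, h ^ d * q (φ y) ^ 2 := by
    rw [← himgT, hcov _ hTm]
  have h2 : ∫ x in ω, q x ^ 2 = ∫ y in ω', h ^ d * q (φ y) ^ 2 := by
    rw [← himgω, hcov _ hω'm]
  rw [h1, h2, integral_const_mul, integral_const_mul]
  have hu := hunit ω' hω'm hω'T hvol (fun y => q (φ y)) hqφ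
  calc h ^ d * ∫ y in cube d 1 0, q (φ y) ^ 2
      ≤ h ^ d * (C * ∫ y in ω', q (φ y) ^ 2) := mul_le_mul_of_nonneg_left hu hhd.le
    _ = C * (h ^ d * ∫ y in ω', q (φ y) ^ 2) := by ring
end Repr
end
end

section
/- Let d ≥ 1 and p ≥ 0 be integers and let C₀ > 0. There exists a constant C = C(d,p,C₀) such that for every h > 0, every pair of axis-parallel closed cubes S, T ⊂ ℝ^d of side length h with diam(S ∪ T) ≤ C₀ h, and every polynomial q on ℝ^d of degree at most p in each variable, one has ∫_T q(x)² dx ≤ C ∫_S q(x)² dx. -/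
open MeasureTheory

noncomputable section

namespace Aux

variable {d p : ℕ}

lemma cube_eq_preimage (h : ℝ) (a : EuclideanSpace ℝ (Fin d)) :
    cube d h a = (⇑(EuclideanSpace.equiv (Fin d) ℝ)) ⁻¹'
      (Set.univ.pi fun i => Set.Icc (a i) (a i + h)) := by
  ext x
  simp only [cube, Set.mem_setOf_eq, Set.mem_preimage, Set.mem_univ_pi, Set.mem_Icc]
  rfl

lemma isCompact_cube (h : ℝ) (a : EuclideanSpace ℝ (Fin d)) : IsCompact (cube d h a) := by
  rw [cube_eq_preimage]
  have h2 : (⇑(EuclideanSpace.equiv (Fin d) ℝ)) ⁻¹'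
      (Set.univ.pi fun i => Set.Icc (a i) (a i + h)) =
      (EuclideanSpace.equiv (Fin d) ℝ).symm '' (Set.univ.pi fun i => Set.Icc (a i) (a i + h)) := by
    ext x
    constructor
    · intro hx; exact ⟨_, hx, rfl⟩
    · rintro ⟨y, hy, rfl⟩; rwa [Set.mem_preimage, ContinuousLinearEquiv.apply_symm_apply]
  rw [h2]
  exact (isCompact_univ_pi fun i => isCompact_Icc).image
    (EuclideanSpace.equiv (Fin d) ℝ).symm.continuous

lemma measurableSet_cube (h : ℝ) (a : EuclideanSpace ℝ (Fin d)) :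
    MeasurableSet (cube d h a) :=
  (isCompact_cube h a).isClosed.measurableSet

lemma cube_eq_preimage' (h : ℝ) (a : EuclideanSpace ℝ (Fin d)) :
    cube d h a = (⇑(MeasurableEquiv.toLp 2 (Fin d → ℝ)).symm) ⁻¹'
      (Set.univ.pi fun i => Set.Icc (a i) (a i + h)) := cube_eq_preimage h a

lemma volume_cube_one (a : EuclideanSpace ℝ (Fin d)) : volume (cube d 1 a) = 1 := by
  rw [cube_eq_preimage']
  rw [(EuclideanSpace.volume_preserving_symm_measurableEquiv_toLp (Fin d)).measure_preimage
    ((MeasurableSet.univ_pi fun i => measurableSet_Icc).nullMeasurableSet)]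
  simp [Real.volume_Icc_pi]


open Pointwise in
lemma smul_cube {h : ℝ} (hh : 0 < h) (c : EuclideanSpace ℝ (Fin d)) :
    h • cube d 1 c = cube d h (h • c) := by
  ext x
  rw [Set.mem_smul_set_iff_inv_smul_mem₀ hh.ne']
  simp only [cube, Set.mem_setOf_eq, PiLp.smul_apply, smul_eq_mul]
  refine forall_congr' fun i => ?_
  rw [le_inv_mul_iff₀ hh, inv_mul_le_iff₀ hh, mul_add_one]

lemma add_preimage_cube (h : ℝ) (a b : EuclideanSpace ℝ (Fin d)) :
    (fun x => a + x) ⁻¹' cube d h b = cube d h (b - a) := by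
  ext x
  simp only [cube, Set.mem_preimage, Set.mem_setOf_eq, PiLp.add_apply, PiLp.sub_apply]
  refine forall_congr' fun i => ?_
  constructor <;> rintro ⟨h1, h2⟩ <;> exact ⟨by linarith, by linarith⟩

lemma setIntegral_cube_cov {h : ℝ} (hh : 0 < h) (a b : EuclideanSpace ℝ (Fin d))
    (f : EuclideanSpace ℝ (Fin d) → ℝ) :
    ∫ x in cube d h b, f x = h ^ d * ∫ y in cube d 1 (h⁻¹ • (b - a)), f (a + h • y) := by
  have e1 := Measure.setIntegral_comp_smul_of_pos volume (fun x => f (a + x))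
    (cube d 1 (h⁻¹ • (b - a))) hh
  rw [smul_cube hh, smul_inv_smul₀ hh.ne'] at e1
  have e2 := (measurePreserving_add_left volume a).setIntegral_preimage_emb
    (MeasurableEquiv.addLeft a).measurableEmbedding f (cube d h b)
  rw [add_preimage_cube] at e2
  rw [e1, e2, finrank_euclideanSpace_fin, smul_eq_mul]
  rw [← mul_assoc, mul_inv_cancel₀ (by positivity), one_mul]

lemma eval_comp_line (Q : MvPolynomial (Fin d) ℝ) (z u : Fin d → ℝ) (t : ℝ) :
    Polynomial.eval t (MvPolynomial.aeval
      (fun i => Polynomial.C (z i) + Polynomial.C (u i) * Polynomial.X) Q) =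
    MvPolynomial.eval (fun i => z i + u i * t) Q := by
  have h : (Polynomial.evalRingHom t).comp
      (MvPolynomial.aeval
        (fun i => Polynomial.C (z i) + Polynomial.C (u i) * Polynomial.X) :
        MvPolynomial (Fin d) ℝ →ₐ[ℝ] Polynomial ℝ).toRingHom
      = (MvPolynomial.eval fun i => z i + u i * t) := by
    apply MvPolynomial.ringHom_ext <;> intro <;> simp
  exact DFunLike.congr_fun h Q

lemma mv_eq_zero_of_ball (Q : MvPolynomial (Fin d) ℝ) (z : EuclideanSpace ℝ (Fin d)) {r : ℝ}
    (hr : 0 < r) (hQ : ∀ x ∈ Metric.ball z r, MvPolynomial.eval (fun i => x i) Q = 0) :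
    Q = 0 := by
  have key : ∀ v : Fin d → ℝ, MvPolynomial.eval v Q = 0 := by
    intro v
    set u : EuclideanSpace ℝ (Fin d) := WithLp.toLp 2 (fun i => v i - z i : Fin d → ℝ) with hu
    set g : Polynomial ℝ := MvPolynomial.aeval
      (fun i => Polynomial.C (z i) + Polynomial.C (u i) * Polynomial.X) Q with hg
    set ε : ℝ := r / (‖u‖ + 1) with hε
    have hunorm : (0:ℝ) ≤ ‖u‖ := norm_nonneg u
    have hεpos : 0 < ε := by positivity
    have hroots : ∀ t ∈ Set.Ioo (-ε) ε, Polynomial.eval t g = 0 := by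
      intro t ht
      have habs : |t| < ε := abs_lt.2 ⟨ht.1, ht.2⟩
      have hmem : z + t • u ∈ Metric.ball z r := by
        rw [Metric.mem_ball, dist_eq_norm]
        have : z + t • u - z = t • u := by abel
        rw [this, norm_smul]
        calc ‖t‖ * ‖u‖ ≤ ε * ‖u‖ := by
              apply mul_le_mul_of_nonneg_right (le_of_lt habs) hunorm
          _ < ε * (‖u‖ + 1) := by nlinarith
          _ = r := by rw [hε, div_mul_cancel₀ _ (by positivity)]
      have e2 : (fun i => z i + u i * t) = (fun i => (z + t • u) i) := by
        funext i
        simp only [PiLp.add_apply, PiLp.smul_apply, smul_eq_mul]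
        ring
      rw [eval_comp_line, e2]
      exact hQ _ hmem
    have hg0 : g = 0 := by
      apply Polynomial.eq_zero_of_infinite_isRoot
      exact Set.Infinite.mono (fun t ht => hroots t ht) (Set.Ioo_infinite (by linarith))
    have e : (fun i => z i + u i * 1) = v := by
      funext i
      simp only [hu, PiLp.toLp_apply]
      ring
    have h1 : MvPolynomial.eval v Q = Polynomial.eval 1 g := by
      rw [hg, eval_comp_line, e]
    rw [h1, hg0]
    simp
  apply MvPolynomial.funext
  intro x
  simp [key x]

open MvPolynomial

def expo (d p : ℕ) (α : Fin d → Fin (p+1)) : Fin d →₀ ℕ :=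
  Finsupp.equivFunOnFinite.symm (fun i => (α i : ℕ))

lemma expo_apply (α : Fin d → Fin (p+1)) (i : Fin d) : expo d p α i = α i := rfl

lemma expo_injective : Function.Injective (expo d p) := by
  intro α β hab
  funext i
  have : (expo d p α) i = (expo d p β) i := by rw [hab]
  rw [expo_apply, expo_apply] at this
  exact Fin.val_injective this

def Phi (d p : ℕ) (c : (Fin d → Fin (p+1)) → ℝ) : MvPolynomial (Fin d) ℝ :=
  ∑ α : Fin d → Fin (p+1), MvPolynomial.monomial (expo d p α) (c α)

lemma coeff_Phi (c : (Fin d → Fin (p+1)) → ℝ) (α₀ : Fin d → Fin (p+1)) :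
    MvPolynomial.coeff (expo d p α₀) (Phi d p c) = c α₀ := by
  classical
  rw [Phi, MvPolynomial.coeff_sum]
  rw [Finset.sum_eq_single α₀]
  · simp [MvPolynomial.coeff_monomial]
  · intro β _ hβ
    rw [MvPolynomial.coeff_monomial, if_neg (fun hc => hβ (expo_injective hc))]
  · simp

lemma Phi_ne_zero {c : (Fin d → Fin (p+1)) → ℝ} (hc : c ≠ 0) : Phi d p c ≠ 0 := by
  intro h
  apply hc
  funext α
  have := coeff_Phi c α
  rw [h] at this
  simpa using this.symm

lemma degreeOf_Phi_le (c : (Fin d → Fin (p+1)) → ℝ) (i : Fin d) :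
    MvPolynomial.degreeOf i (Phi d p c) ≤ p := by
  apply (MvPolynomial.degreeOf_sum_le _ _ _).trans
  apply Finset.sup_le
  intro α _
  -- degreeOf i (monomial (expo α) (c α)) ≤ (expo α) i ≤ p
  by_cases hzero : c α = 0
  · simp [hzero]
  · rw [MvPolynomial.degreeOf_monomial_eq _ _ hzero, expo_apply]
    exact Fin.is_le _

lemma exists_Phi_eq (P : MvPolynomial (Fin d) ℝ) (hP : ∀ i, P.degreeOf i ≤ p) :
    ∃ c, Phi d p c = P := by
  classical
  refine ⟨fun α => MvPolynomial.coeff (expo d p α) P, ?_⟩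
  apply MvPolynomial.ext
  intro m
  by_cases hm : ∀ i, m i ≤ p
  · set α₀ : Fin d → Fin (p+1) := fun i => ⟨m i, Nat.lt_succ_of_le (hm i)⟩ with hα₀
    have hexp : expo d p α₀ = m := by
      ext i
      rw [expo_apply]
    rw [← hexp, coeff_Phi]
  · push_neg at hm
    obtain ⟨i, hi⟩ := hm
    have h1 : MvPolynomial.coeff m (Phi d p (fun α => MvPolynomial.coeff (expo d p α) P)) = 0 := by
      rw [Phi, MvPolynomial.coeff_sum]
      apply Finset.sum_eq_zero
      intro β _
      rw [MvPolynomial.coeff_monomial, if_neg]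
      intro hc
      have : (expo d p β) i = m i := by rw [hc]
      rw [expo_apply] at this
      have := Fin.is_le (β i)
      omega
    have h2 : MvPolynomial.coeff m P = 0 := by
      by_contra hne
      have hmem : m ∈ P.support := MvPolynomial.mem_support_iff.2 hne
      have := MvPolynomial.monomial_le_degreeOf i hmem
      have := hP i
      omega
    rw [h1, h2]

/-- evaluation of `Phi c` as a function on Euclidean space -/
def qf (d p : ℕ) (c : (Fin d → Fin (p+1)) → ℝ) (x : EuclideanSpace ℝ (Fin d)) : ℝ :=
  MvPolynomial.eval (fun i => x i) (Phi d p c)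

lemma continuous_coords : Continuous (fun x : EuclideanSpace ℝ (Fin d) => (fun i => x i : Fin d → ℝ)) := by
  apply continuous_pi
  intro i
  exact (EuclideanSpace.proj i).continuous

lemma continuous_evalP (P : MvPolynomial (Fin d) ℝ) :
    Continuous (fun x : EuclideanSpace ℝ (Fin d) => MvPolynomial.eval (fun i => x i) P) :=
  (MvPolynomial.continuous_eval P).comp continuous_coords

lemma continuous_qf (c : (Fin d → Fin (p+1)) → ℝ) : Continuous (qf d p c) :=
  continuous_evalP _

/-- the monomial functions -/
def mf (d p : ℕ) (α : Fin d → Fin (p+1)) (x : EuclideanSpace ℝ (Fin d)) : ℝ :=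
  ∏ i, (x i) ^ (α i : ℕ)

lemma continuous_mf (α : Fin d → Fin (p+1)) : Continuous (mf d p α) := by
  apply continuous_finset_prod
  intro i _
  exact ((EuclideanSpace.proj i).continuous).pow _

lemma qf_eq (c : (Fin d → Fin (p+1)) → ℝ) (x : EuclideanSpace ℝ (Fin d)) :
    qf d p c x = ∑ α : Fin d → Fin (p+1), c α * mf d p α x := by
  rw [qf, Phi, map_sum]
  refine Finset.sum_congr rfl fun α _ => ?_
  rw [MvPolynomial.eval_monomial, mf]
  congr 1
  rw [expo]
  exact Finsupp.prod_fintype _ _ (fun i => pow_zero _)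

/-- the quadratic form: L² norm squared over the unit cube -/
def F (d p : ℕ) (c : (Fin d → Fin (p+1)) → ℝ) : ℝ :=
  ∫ x in cube d 1 0, (qf d p c x) ^ 2

/-- Gram coefficients -/
def G (d p : ℕ) (α β : Fin d → Fin (p+1)) : ℝ :=
  ∫ x in cube d 1 0, mf d p α x * mf d p β x

lemma integrableOn_cube {f : EuclideanSpace ℝ (Fin d) → ℝ} (hf : Continuous f)
    (h : ℝ) (a : EuclideanSpace ℝ (Fin d)) : IntegrableOn f (cube d h a) volume :=
  hf.continuousOn.integrableOn_compact (isCompact_cube h a)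

lemma F_eq (c : (Fin d → Fin (p+1)) → ℝ) :
    F d p c = ∑ α : Fin d → Fin (p+1), ∑ β : Fin d → Fin (p+1), (c α * c β) * G d p α β := by
  have hexp : ∀ x, (qf d p c x) ^ 2 = ∑ α : Fin d → Fin (p+1), ∑ β : Fin d → Fin (p+1),
      (c α * c β) * (mf d p α x * mf d p β x) := by
    intro x
    rw [sq, qf_eq, Finset.sum_mul_sum]
    exact Finset.sum_congr rfl fun α _ => Finset.sum_congr rfl fun β _ => by ring
  rw [F]
  rw [MeasureTheory.setIntegral_congr_fun (measurableSet_cube 1 0) (fun x _ => hexp x)]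
  rw [MeasureTheory.integral_finset_sum]
  · refine Finset.sum_congr rfl fun α _ => ?_
    rw [MeasureTheory.integral_finset_sum]
    · refine Finset.sum_congr rfl fun β _ => ?_
      rw [G, MeasureTheory.integral_const_mul]
    · intro β _
      exact (integrableOn_cube (continuous_const.mul ((continuous_mf α).mul (continuous_mf β))) 1 0)
  · intro α _
    apply MeasureTheory.integrable_finset_sum
    intro β _
    exact (integrableOn_cube (continuous_const.mul ((continuous_mf α).mul (continuous_mf β))) 1 0)

lemma continuous_F : Continuous (F d p) := by
  have : F d p = fun c => ∑ α : Fin d → Fin (p+1), ∑ β : Fin d → Fin (p+1),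
      (c α * c β) * G d p α β := funext F_eq
  rw [this]
  apply continuous_finset_sum
  intro α _
  apply continuous_finset_sum
  intro β _
  exact ((continuous_apply α).mul (continuous_apply β)).mul continuous_const

lemma F_smul (t : ℝ) (c : (Fin d → Fin (p+1)) → ℝ) : F d p (t • c) = t ^ 2 * F d p c := by
  rw [F_eq, F_eq, Finset.mul_sum]
  refine Finset.sum_congr rfl fun α _ => ?_
  rw [Finset.mul_sum]
  refine Finset.sum_congr rfl fun β _ => ?_
  simp only [Pi.smul_apply, smul_eq_mul]
  ring

lemma abs_coord_le_norm (w : EuclideanSpace ℝ (Fin d)) (i : Fin d) : |w i| ≤ ‖w‖ := by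
  rw [EuclideanSpace.norm_eq, ← Real.sqrt_sq_eq_abs]
  apply Real.sqrt_le_sqrt
  have h := Finset.single_le_sum (f := fun j => ‖w j‖^2) (fun j _ => sq_nonneg _) (Finset.mem_univ i)
  simpa [Real.norm_eq_abs, sq_abs] using h

lemma F_nonneg (c : (Fin d → Fin (p+1)) → ℝ) : 0 ≤ F d p c :=
  MeasureTheory.setIntegral_nonneg (measurableSet_cube 1 0) (fun x _ => sq_nonneg _)

lemma F_pos {c : (Fin d → Fin (p+1)) → ℝ} (hc : c ≠ 0) : 0 < F d p c := by
  classical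
  set z : EuclideanSpace ℝ (Fin d) := WithLp.toLp 2 (fun _ => (1:ℝ)/2) with hz
  have hball : Metric.ball z (1/2) ⊆ cube d 1 0 := by
    intro x hx
    rw [Metric.mem_ball, dist_eq_norm] at hx
    intro i
    have h1 : |x i - 1/2| ≤ ‖x - z‖ := by
      have := abs_coord_le_norm (x - z) i
      simpa [hz] using this
    have h2 : |x i - 1/2| < 1/2 := lt_of_le_of_lt h1 hx
    rw [abs_lt] at h2
    constructor
    · simpa using by linarith [h2.1]
    · simpa using by linarith [h2.2]
  have hq : ∃ x₀ ∈ Metric.ball z (1/2), qf d p c x₀ ≠ 0 := by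
    by_contra hcon
    push_neg at hcon
    have : Phi d p c = 0 :=
      mv_eq_zero_of_ball (Phi d p c) z (by norm_num) (fun x hx => hcon x hx)
    exact Phi_ne_zero hc this
  obtain ⟨x₀, hx₀ball, hx₀⟩ := hq
  have hint : IntegrableOn (fun x => qf d p c x ^ 2) (cube d 1 0) volume :=
    integrableOn_cube ((continuous_qf c).pow 2) 1 0
  rw [F]
  rw [MeasureTheory.setIntegral_pos_iff_support_of_nonneg_ae
    (Filter.Eventually.of_forall (fun x => sq_nonneg _)) hint]
  set U : Set (EuclideanSpace ℝ (Fin d)) := Metric.ball z (1/2) ∩ {x | qf d p c x ≠ 0} with hU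
  have hUopen : IsOpen U := Metric.isOpen_ball.inter (isOpen_ne_fun (continuous_qf c) continuous_const)
  have hUsub : U ⊆ (Function.support fun x => qf d p c x ^ 2) ∩ cube d 1 0 := by
    rintro x ⟨hx1, hx2⟩
    refine ⟨?_, hball hx1⟩
    simp only [Function.mem_support]
    exact pow_ne_zero _ hx2
  calc (0:ENNReal) < volume U := hUopen.measure_pos volume ⟨x₀, hx₀ball, hx₀⟩
    _ ≤ _ := measure_mono hUsub

lemma exists_eps (d p : ℕ) : ∃ ε : ℝ, 0 < ε ∧
    ∀ c : (Fin d → Fin (p+1)) → ℝ, ε * ‖c‖ ^ 2 ≤ F d p c := by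
  classical
  have hsp : (Metric.sphere (0 : (Fin d → Fin (p+1)) → ℝ) 1).Nonempty :=
    NormedSpace.sphere_nonempty.2 zero_le_one
  obtain ⟨c₀, hc₀mem, hc₀min⟩ := (isCompact_sphere (0 : (Fin d → Fin (p+1)) → ℝ) 1).exists_isMinOn
    hsp (continuous_F.continuousOn)
  have hc₀norm : ‖c₀‖ = 1 := by simpa using hc₀mem
  have hc₀ne : c₀ ≠ 0 := by
    intro h; rw [h] at hc₀norm; simp at hc₀norm
  refine ⟨F d p c₀, F_pos hc₀ne, ?_⟩
  intro c
  by_cases hc : c = 0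
  · subst hc
    have : F d p (0 : (Fin d → Fin (p+1)) → ℝ) = 0 := by
      have := F_smul (d := d) (p := p) 0 0
      simpa using this
    simp [this]
  · have hnc : (0:ℝ) < ‖c‖ := norm_pos_iff.2 hc
    set u := ‖c‖⁻¹ • c with hu
    have humem : u ∈ Metric.sphere (0 : (Fin d → Fin (p+1)) → ℝ) 1 := by
      simp [hu, norm_smul, abs_of_nonneg (inv_nonneg.2 hnc.le), inv_mul_cancel₀ hnc.ne']
    have h1 : F d p c₀ ≤ F d p u := hc₀min humem
    have h2 : F d p c = ‖c‖ ^ 2 * F d p u := by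
      have : c = ‖c‖ • u := by
        rw [hu, smul_smul, mul_inv_cancel₀ hnc.ne', one_smul]
      conv_lhs => rw [this]
      rw [F_smul]
    rw [h2]
    have := mul_le_mul_of_nonneg_left h1 (sq_nonneg ‖c‖)
    linarith [this]

lemma mf_bound {C₀ : ℝ} (hC₀ : 0 < C₀) (α : Fin d → Fin (p+1))
    {x : EuclideanSpace ℝ (Fin d)} (hx : ∀ i, |x i| ≤ C₀ + 1) :
    |mf d p α x| ≤ (C₀ + 1) ^ (d * p) := by
  have hb : (1:ℝ) ≤ C₀ + 1 := by linarith
  rw [mf, Finset.abs_prod]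
  calc ∏ i, |x i ^ (α i : ℕ)| ≤ ∏ i : Fin d, (C₀ + 1) ^ p := by
        apply Finset.prod_le_prod (fun i _ => abs_nonneg _)
        intro i _
        rw [abs_pow]
        calc |x i| ^ (α i : ℕ) ≤ (C₀ + 1) ^ (α i : ℕ) :=
              pow_le_pow_left₀ (abs_nonneg _) (hx i) _
          _ ≤ (C₀ + 1) ^ p := pow_le_pow_right₀ hb (Fin.is_le _)
    _ = (C₀ + 1) ^ (d * p) := by
        rw [Finset.prod_const, ← pow_mul]
        simp [Finset.card_univ, mul_comm]

lemma qf_pointwise_bound {C₀ : ℝ} (hC₀ : 0 < C₀) (c : (Fin d → Fin (p+1)) → ℝ)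
    {x : EuclideanSpace ℝ (Fin d)} (hx : ∀ i, |x i| ≤ C₀ + 1) :
    |qf d p c x| ≤ (Fintype.card (Fin d → Fin (p+1)) : ℝ) * (C₀ + 1) ^ (d * p) * ‖c‖ := by
  rw [qf_eq]
  calc |∑ α : Fin d → Fin (p+1), c α * mf d p α x|
      ≤ ∑ α : Fin d → Fin (p+1), |c α * mf d p α x| := Finset.abs_sum_le_sum_abs _ _
    _ ≤ ∑ α : Fin d → Fin (p+1), ‖c‖ * (C₀ + 1) ^ (d * p) := by
        apply Finset.sum_le_sum
        intro α _
        rw [abs_mul]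
        apply mul_le_mul (norm_le_pi_norm c α) (mf_bound hC₀ α hx)
          (abs_nonneg _) (norm_nonneg _)
    _ = (Fintype.card (Fin d → Fin (p+1)) : ℝ) * (C₀ + 1) ^ (d * p) * ‖c‖ := by
        rw [Finset.sum_const, Finset.card_univ, nsmul_eq_mul]
        ring

lemma keyA (d p : ℕ) {C₀ : ℝ} (hC₀ : 0 < C₀) :
    ∃ C : ℝ, 0 < C ∧ ∀ (c : (Fin d → Fin (p+1)) → ℝ) (x : EuclideanSpace ℝ (Fin d)),
      (∀ i, |x i| ≤ C₀ + 1) → qf d p c x ^ 2 ≤ C * F d p c := by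
  obtain ⟨ε, hε, hεle⟩ := exists_eps d p
  set B : ℝ := (Fintype.card (Fin d → Fin (p+1)) : ℝ) * (C₀ + 1) ^ (d * p) with hB
  have hBpos : 0 < B := by
    apply mul_pos
    · exact_mod_cast Fintype.card_pos
    · positivity
  refine ⟨(B ^ 2 + 1) / ε, by positivity, ?_⟩
  intro c x hx
  have h1 : |qf d p c x| ≤ B * ‖c‖ := qf_pointwise_bound hC₀ c hx
  have h2 : qf d p c x ^ 2 ≤ B ^ 2 * ‖c‖ ^ 2 := by
    rw [← sq_abs, ← mul_pow]
    exact pow_le_pow_left₀ (abs_nonneg _) h1 2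
  have h3 : ε * ‖c‖ ^ 2 ≤ F d p c := hεle c
  calc qf d p c x ^ 2 ≤ B ^ 2 * ‖c‖ ^ 2 := h2
    _ ≤ (B ^ 2 + 1) / ε * (ε * ‖c‖ ^ 2) := by
        rw [div_mul_eq_mul_div, mul_comm ε, ← mul_assoc, mul_div_assoc, div_self hε.ne', mul_one]
        nlinarith [sq_nonneg ‖c‖]
    _ ≤ (B ^ 2 + 1) / ε * F d p c := by
        apply mul_le_mul_of_nonneg_left h3 (by positivity)

lemma keyB (d p : ℕ) {C₀ : ℝ} (hC₀ : 0 < C₀) :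
    ∃ C : ℝ, 0 < C ∧ ∀ (q : EuclideanSpace ℝ (Fin d) → ℝ), IsQp d p q →
      ∀ b : EuclideanSpace ℝ (Fin d), (∀ i, |b i| ≤ C₀) →
      ∫ x in cube d 1 b, q x ^ 2 ≤ C * ∫ x in cube d 1 0, q x ^ 2 := by
  obtain ⟨C, hCpos, hC⟩ := keyA d p hC₀
  refine ⟨C, hCpos, ?_⟩
  rintro q ⟨P, hPdeg, hPeval⟩ b hb
  obtain ⟨c, hc⟩ := exists_Phi_eq P hPdeg
  have hqf : ∀ x, q x = qf d p c x := by
    intro x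
    rw [hPeval, qf, hc]
  have hFq : F d p c = ∫ x in cube d 1 0, q x ^ 2 := by
    rw [F]
    exact MeasureTheory.setIntegral_congr_fun (measurableSet_cube 1 0)
      (fun x _ => by rw [hqf x])
  have hsub : ∀ x ∈ cube d 1 b, q x ^ 2 ≤ C * F d p c := by
    intro x hxmem
    rw [hqf x]
    apply hC c x
    intro i
    obtain ⟨h1, h2⟩ := hxmem i
    have := hb i
    rw [abs_le] at this ⊢
    constructor <;> linarith [this.1, this.2]
  calc ∫ x in cube d 1 b, q x ^ 2 ≤ ∫ _x in cube d 1 b, C * F d p c := by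
        apply MeasureTheory.setIntegral_mono_on
        · have : ∀ x, q x ^ 2 = qf d p c x ^ 2 := fun x => by rw [hqf x]
          exact (funext this) ▸ integrableOn_cube ((continuous_qf c).pow 2) 1 b
        · exact MeasureTheory.integrableOn_const (by rw [volume_cube_one]; exact ENNReal.one_ne_top)
        · exact measurableSet_cube 1 b
        · exact hsub
    _ = C * ∫ x in cube d 1 0, q x ^ 2 := by
        rw [MeasureTheory.setIntegral_const, measureReal_def, volume_cube_one, hFq]
        simp

lemma degreeOf_subst_le (a : EuclideanSpace ℝ (Fin d)) (h : ℝ) (P : MvPolynomial (Fin d) ℝ)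
    (i : Fin d) :
    MvPolynomial.degreeOf i (MvPolynomial.bind₁
      (fun j => MvPolynomial.C (a j) + MvPolynomial.C h * MvPolynomial.X j) P)
    ≤ MvPolynomial.degreeOf i P := by
  classical
  set f : Fin d → MvPolynomial (Fin d) ℝ :=
    fun j => MvPolynomial.C (a j) + MvPolynomial.C h * MvPolynomial.X j with hf
  have hfdeg : ∀ j, MvPolynomial.degreeOf i (f j) ≤ if j = i then 1 else 0 := by
    intro j
    apply (MvPolynomial.degreeOf_add_le _ _ _).trans
    rw [MvPolynomial.degreeOf_C]
    have h2 : MvPolynomial.degreeOf i (MvPolynomial.C h * MvPolynomial.X j :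
        MvPolynomial (Fin d) ℝ) ≤ if j = i then 1 else 0 := by
      apply (MvPolynomial.degreeOf_mul_le _ _ _).trans
      rw [MvPolynomial.degreeOf_C, MvPolynomial.degreeOf_X]
      by_cases hji : j = i
      · subst hji; simp
      · simp [hji, Ne.symm hji]
    simpa using h2
  conv_lhs => rw [P.as_sum, map_sum]
  apply (MvPolynomial.degreeOf_sum_le _ _ _).trans
  apply Finset.sup_le
  intro v hv
  rw [MvPolynomial.bind₁_monomial]
  apply le_trans (MvPolynomial.degreeOf_mul_le _ _ _)
  rw [MvPolynomial.degreeOf_C, zero_add]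
  apply le_trans (MvPolynomial.degreeOf_prod_le _ _ _)
  calc ∑ j ∈ v.support, MvPolynomial.degreeOf i (f j ^ v j)
      ≤ ∑ j ∈ v.support, v j * (if j = i then 1 else 0) := by
        apply Finset.sum_le_sum
        intro j _
        exact le_trans (MvPolynomial.degreeOf_pow_le _ _ _)
          (Nat.mul_le_mul_left _ (hfdeg j))
    _ ≤ v i := by
        rw [Finset.sum_congr rfl (fun j _ => by rw [mul_ite, mul_one, mul_zero])]
        rw [Finset.sum_ite_eq' v.support i (fun j => v j)]
        split <;> omega
    _ ≤ MvPolynomial.degreeOf i P := MvPolynomial.monomial_le_degreeOf i hv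

lemma isQp_comp_affine {q : EuclideanSpace ℝ (Fin d) → ℝ} (hq : IsQp d p q)
    (a : EuclideanSpace ℝ (Fin d)) (h : ℝ) :
    IsQp d p (fun y => q (a + h • y)) := by
  obtain ⟨P, hdeg, heval⟩ := hq
  refine ⟨MvPolynomial.bind₁
    (fun j => MvPolynomial.C (a j) + MvPolynomial.C h * MvPolynomial.X j) P,
    fun i => (degreeOf_subst_le a h P i).trans (hdeg i), ?_⟩
  intro y
  show q (a + h • y) = _
  rw [heval]
  have : MvPolynomial.eval (fun i => y i) (MvPolynomial.bind₁
      (fun j => MvPolynomial.C (a j) + MvPolynomial.C h * MvPolynomial.X j) P)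
      = MvPolynomial.eval (fun i => a i + h * y i) P := by
    rw [show (MvPolynomial.eval (fun i => y i) : MvPolynomial (Fin d) ℝ →+* ℝ)
      = MvPolynomial.eval₂Hom (RingHom.id ℝ) (fun i => y i) from rfl]
    rw [MvPolynomial.eval₂Hom_bind₁]
    simp
  rw [this]
  congr 1

end Aux

theorem statement1 (d p : ℕ) (hd : 1 ≤ d) (C₀ : ℝ) (hC₀ : 0 < C₀) :
    ∃ C : ℝ, 0 < C ∧ ∀ h : ℝ, 0 < h → ∀ a b : EuclideanSpace ℝ (Fin d),
      Metric.diam (cube d h a ∪ cube d h b) ≤ C₀ * h →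
      ∀ q : EuclideanSpace ℝ (Fin d) → ℝ, IsQp d p q →
        ∫ x in cube d h b, q x ^ 2 ≤ C * ∫ x in cube d h a, q x ^ 2 := by
  obtain ⟨C, hCpos, hC⟩ := Aux.keyB d p hC₀
  refine ⟨C, hCpos, ?_⟩
  intro h hh a b hdiam q hq
  set c : EuclideanSpace ℝ (Fin d) := h⁻¹ • (b - a) with hc
  have hcbound : ∀ i, |c i| ≤ C₀ := by
    intro i
    have hmema : a ∈ cube d h a := fun j => ⟨le_refl _, by linarith⟩
    have hmemb : b ∈ cube d h b := fun j => ⟨le_refl _, by linarith⟩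
    have hbounded : Bornology.IsBounded (cube d h a ∪ cube d h b) :=
      ((Aux.isCompact_cube h a).union (Aux.isCompact_cube h b)).isBounded
    have hdist : dist b a ≤ C₀ * h :=
      le_trans (Metric.dist_le_diam_of_mem hbounded (Or.inr hmemb) (Or.inl hmema)) hdiam
    have hco : |(b - a) i| ≤ C₀ * h := by
      refine le_trans (Aux.abs_coord_le_norm (b - a) i) ?_
      rwa [← dist_eq_norm]
    have habs : |c i| = h⁻¹ * |(b - a) i| := by
      rw [hc]
      simp only [PiLp.smul_apply, smul_eq_mul, abs_mul, abs_of_nonneg (inv_nonneg.2 hh.le)]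
    rw [habs]
    calc h⁻¹ * |(b - a) i| ≤ h⁻¹ * (C₀ * h) := by
          apply mul_le_mul_of_nonneg_left hco (inv_nonneg.2 hh.le)
      _ = C₀ := by
          rw [mul_comm C₀ h, ← mul_assoc, inv_mul_cancel₀ hh.ne', one_mul]
  have hQ := Aux.isQp_comp_affine hq a h
  have e1 := Aux.setIntegral_cube_cov hh a b (fun x => q x ^ 2)
  have e2 := Aux.setIntegral_cube_cov hh a a (fun x => q x ^ 2)
  rw [sub_self, smul_zero] at e2
  have hmain := hC _ hQ c hcbound
  rw [e1, e2, ← hc]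
  calc h ^ d * ∫ y in cube d 1 c, q (a + h • y) ^ 2
      ≤ h ^ d * (C * ∫ y in cube d 1 0, q (a + h • y) ^ 2) := by
        apply mul_le_mul_of_nonneg_left hmain (by positivity)
    _ = C * (h ^ d * ∫ y in cube d 1 0, q (a + h • y) ^ 2) := by ring
end
end

section
/- Let d ≥ 1 and p ≥ 0 be integers and let C₀ > 0. There exists a constant C = C(d,p,C₀) such that for every h > 0, every axis-parallel closed cube T ⊂ ℝ^d of side length h, every Borel set Γ ⊆ T whose (d−1)-dimensional Hausdorff measure satisfies H^{d−1}(Γ) ≤ C₀ h^{d−1}, and every polynomial q on ℝ^d of degree at most p in each variable, one has h ∫_Γ ‖∇q(x)‖² dH^{d−1}(x) ≤ C ∫_T ‖∇q(x)‖² dx. -/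
open MeasureTheory

noncomputable section

namespace S3
variable {d p : ℕ}
abbrev Eu (d : ℕ) := EuclideanSpace ℝ (Fin d)
abbrev Idx (d p : ℕ) := Fin d → Fin (p + 1)

def mono (m : Idx d p) (x : Eu d) : ℝ := ∏ i, x i ^ (m i : ℕ)

def pfun (c : Idx d p → ℝ) (x : Eu d) : ℝ := ∑ m, c m * mono m x

lemma continuous_mono (m : Idx d p) : Continuous (mono m) := by
  unfold mono
  exact continuous_finset_prod _ fun i _ =>
    ((EuclideanSpace.proj (𝕜 := ℝ) i).continuous.pow _)

lemma continuous_pfun (c : Idx d p → ℝ) : Continuous (pfun c) := by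
  unfold pfun
  exact continuous_finset_sum _ fun m _ => continuous_const.mul (continuous_mono m)

def Dmono (m : Idx d p) (x : Eu d) : Eu d →L[ℝ] ℝ :=
  ∑ j, (∏ l ∈ Finset.univ.erase j, x l ^ (m l : ℕ)) •
    ((((m j : ℕ) : ℝ) * x j ^ ((m j : ℕ) - 1)) • (EuclideanSpace.proj (𝕜 := ℝ) j))

lemma hasFDerivAt_mono (m : Idx d p) (x : Eu d) :
    HasFDerivAt (mono m) (Dmono m x) x := by
  have h : ∀ j ∈ Finset.univ, HasFDerivAt (fun x : Eu d => x j ^ (m j : ℕ))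
      ((((m j : ℕ) : ℝ) * x j ^ ((m j : ℕ) - 1)) • (EuclideanSpace.proj (𝕜 := ℝ) j)) x :=
    fun j _ => by
      have h1 : HasDerivAt (fun t : ℝ => t ^ (m j : ℕ))
          (((m j : ℕ) : ℝ) * x j ^ ((m j : ℕ) - 1)) (x j) := hasDerivAt_pow _ _
      exact h1.comp_hasFDerivAt x ((EuclideanSpace.proj (𝕜 := ℝ) j).hasFDerivAt (x := x))
  exact HasFDerivAt.finset_prod h

lemma hasFDerivAt_pfun (c : Idx d p → ℝ) (x : Eu d) :
    HasFDerivAt (pfun c) (∑ m, c m • Dmono m x) x :=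
  HasFDerivAt.fun_sum fun m _ => (hasFDerivAt_mono m x).const_mul (c m)

def dmono (i : Fin d) (m : Idx d p) (x : Eu d) : ℝ :=
  ((m i : ℕ) : ℝ) * x i ^ ((m i : ℕ) - 1) * ∏ l ∈ Finset.univ.erase i, x l ^ (m l : ℕ)

lemma Dmono_apply_single (m : Idx d p) (x : Eu d) (i : Fin d) :
    Dmono m x (EuclideanSpace.single i (1 : ℝ)) = dmono i m x := by
  unfold Dmono dmono
  rw [ContinuousLinearMap.sum_apply]
  rw [Finset.sum_eq_single i]
  · simp [EuclideanSpace.single_apply]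
    ring
  · intro j _ hj
    simp only [ContinuousLinearMap.smul_apply, PiLp.proj_apply,
      EuclideanSpace.single_apply, smul_eq_mul]
    rw [if_neg hj]
    ring
  · simp

def dcoef (i : Fin d) (c : Idx d p → ℝ) (m : Idx d p) : ℝ :=
  if h : (m i : ℕ) + 1 < p + 1 then ((m i : ℕ) + 1) * c (Function.update m i ⟨(m i : ℕ) + 1, h⟩)
  else 0


lemma sum_dcoef_eq (i : Fin d) (c : Idx d p → ℝ) (x : Eu d) :
    pfun (dcoef i c) x = ∑ m, c m * dmono i m x := by
  classical
  unfold pfun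
  have hL : ∑ m, dcoef i c m * mono m x
      = ∑ m ∈ Finset.univ.filter (fun m : Idx d p => (m i : ℕ) < p), dcoef i c m * mono m x := by
    refine (Finset.sum_filter_of_ne ?_).symm
    intro m _ hm
    by_contra hlt
    have : dcoef i c m = 0 := by
      unfold dcoef
      rw [dif_neg (by omega)]
    rw [this, zero_mul] at hm
    exact hm rfl
  have hR : ∑ m, c m * dmono i m x
      = ∑ m ∈ Finset.univ.filter (fun m : Idx d p => 0 < (m i : ℕ)), c m * dmono i m x := by
    refine (Finset.sum_filter_of_ne ?_).symm
    intro m _ hm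
    by_contra hlt
    have h0 : (m i : ℕ) = 0 := by omega
    have : dmono i m x = 0 := by unfold dmono; rw [h0]; simp
    rw [this, mul_zero] at hm
    exact hm rfl
  rw [hL, hR]
  refine Finset.sum_nbij'
    (fun m => Function.update m i (if h : (m i : ℕ) + 1 < p + 1 then ⟨(m i : ℕ) + 1, h⟩ else m i))
    (fun m => Function.update m i ⟨(m i : ℕ) - 1, by omega⟩) ?_ ?_ ?_ ?_ ?_
  · intro m hm
    simp only [Finset.mem_filter, Finset.mem_univ, true_and] at hm ⊢
    rw [dif_pos (by omega)]
    rw [Function.update_self]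
    simp
  · intro m hm
    simp only [Finset.mem_filter, Finset.mem_univ, true_and] at hm ⊢
    rw [Function.update_self]
    simp
    omega
  · intro m hm
    simp only [Finset.mem_filter, Finset.mem_univ, true_and] at hm
    rw [dif_pos (by omega : (m i : ℕ) + 1 < p + 1)]
    funext l
    by_cases hl : l = i
    · subst hl
      simp [Function.update_self]
    · simp [Function.update_of_ne hl]
  · intro m hm
    simp only [Finset.mem_filter, Finset.mem_univ, true_and] at hm
    rw [Function.update_self]
    rw [dif_pos (by omega : ((m i : ℕ) - 1) + 1 < p + 1)]
    funext l
    by_cases hl : l = i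
    · subst hl
      simp only [Function.update_self]
      ext
      simp
      omega
    · simp [Function.update_of_ne hl]
  · intro m hm
    simp only [Finset.mem_filter, Finset.mem_univ, true_and] at hm
    rw [dif_pos (by omega : (m i : ℕ) + 1 < p + 1)]
    unfold dcoef
    rw [dif_pos (by omega)]
    set m' : Idx d p := Function.update m i ⟨(m i : ℕ) + 1, by omega⟩ with hm'
    have h1 : (m' i : ℕ) = (m i : ℕ) + 1 := by rw [hm']; simp
    have h2 : ∀ l, l ≠ i → (m' l : ℕ) = (m l : ℕ) := by
      intro l hl; rw [hm', Function.update_of_ne hl]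
    have hmono : mono m x = x i ^ (m i : ℕ) * ∏ l ∈ Finset.univ.erase i, x l ^ (m l : ℕ) := by
      unfold mono
      rw [← Finset.mul_prod_erase Finset.univ _ (Finset.mem_univ i)]
    have hprod : ∏ l ∈ Finset.univ.erase i, x l ^ (m' l : ℕ)
        = ∏ l ∈ Finset.univ.erase i, x l ^ (m l : ℕ) := by
      refine Finset.prod_congr rfl fun l hl => ?_
      rw [h2 l (Finset.ne_of_mem_erase hl)]
    have hdm : dmono i m' x
        = (((m i : ℕ) : ℝ) + 1) * x i ^ (m i : ℕ) * ∏ l ∈ Finset.univ.erase i, x l ^ (m l : ℕ) := by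
      unfold dmono
      rw [h1, hprod]
      push_cast
      simp
    rw [hdm, hmono]
    push_cast
    ring

lemma norm_clm_sq (L : Eu d →L[ℝ] ℝ) :
    ‖L‖ ^ 2 = ∑ i, (L (EuclideanSpace.single i (1 : ℝ))) ^ 2 := by
  set v : Eu d := (InnerProductSpace.toDual ℝ (Eu d)).symm L with hv
  have hLv : L = InnerProductSpace.toDual ℝ (Eu d) v := by
    rw [hv, LinearIsometryEquiv.apply_symm_apply]
  have hnorm : ‖L‖ = ‖v‖ := by
    rw [hLv, LinearIsometryEquiv.norm_map]
  have happ : ∀ i, L (EuclideanSpace.single i (1 : ℝ)) = v i := by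
    intro i
    rw [hLv]
    rw [InnerProductSpace.toDual_apply_apply]
    rw [EuclideanSpace.inner_single_right]
    simp
  rw [hnorm]
  have := EuclideanSpace.norm_eq v
  rw [this, Real.sq_sqrt (by positivity)]
  refine Finset.sum_congr rfl fun i _ => ?_
  rw [happ i, Real.norm_eq_abs, sq_abs]

-- joint continuity
lemma continuous_mono' (m : Idx d p) : Continuous (mono m) := by
  unfold mono
  exact continuous_finset_prod _ fun i _ =>
    ((EuclideanSpace.proj (𝕜 := ℝ) i).continuous.pow _)

lemma continuous_pfun2 :
    Continuous (fun q : (Idx d p → ℝ) × Eu d => pfun q.1 q.2) := by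
  unfold pfun
  exact continuous_finset_sum _ fun m _ =>
    ((continuous_apply m).comp continuous_fst).mul ((continuous_mono' m).comp continuous_snd)

-- toPoly and injectivity
def emb (m : Idx d p) : Fin d →₀ ℕ := Finsupp.equivFunOnFinite.symm (fun i => (m i : ℕ))

lemma emb_apply (m : Idx d p) (i : Fin d) : emb m i = (m i : ℕ) := rfl

lemma emb_injective : Function.Injective (emb (d := d) (p := p)) := by
  intro m m' h
  funext i
  have := congrArg (fun f => f i) h
  simp only [emb_apply] at this
  exact Fin.ext this

def toPoly (c : Idx d p → ℝ) : MvPolynomial (Fin d) ℝ :=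
  ∑ m, MvPolynomial.monomial (emb m) (c m)

lemma eval_toPoly (c : Idx d p → ℝ) (x : Eu d) :
    MvPolynomial.eval (fun i => x i) (toPoly c) = pfun c x := by
  unfold toPoly pfun mono
  rw [map_sum]
  refine Finset.sum_congr rfl fun m _ => ?_
  rw [MvPolynomial.eval_monomial]
  congr 1
  rw [Finsupp.prod]
  rw [Finset.prod_subset (Finset.subset_univ (emb m).support)]
  · rfl
  · intro i _ hi
    have h0 : emb m i = 0 := Finsupp.notMem_support_iff.mp hi
    rw [h0, pow_zero]

lemma coeff_toPoly (c : Idx d p → ℝ) (m : Idx d p) :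
    MvPolynomial.coeff (emb m) (toPoly c) = c m := by
  unfold toPoly
  rw [MvPolynomial.coeff_sum]
  rw [Finset.sum_eq_single m]
  · rw [MvPolynomial.coeff_monomial, if_pos rfl]
  · intro m' _ hm'
    rw [MvPolynomial.coeff_monomial, if_neg (fun h => hm' (emb_injective h))]
  · simp

lemma pfun_zero_of_eval_zero (c : Idx d p → ℝ) (hc : ∀ x : Eu d, pfun c x = 0) : c = 0 := by
  have h0 : toPoly c = 0 := by
    apply MvPolynomial.funext
    intro v
    rw [map_zero]
    have : MvPolynomial.eval (fun i => ((WithLp.equiv 2 (Fin d → ℝ)).symm v) i) (toPoly c) = 0 := by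
      rw [eval_toPoly]
      exact hc _
    simpa using this
  funext m
  have := coeff_toPoly c m
  rw [h0] at this
  simpa using this.symm

lemma analyticOnNhd_pfun (c : Idx d p → ℝ) : AnalyticOnNhd ℝ (pfun c) Set.univ := by
  unfold pfun
  rw [← Finset.sum_fn]
  apply Finset.analyticOnNhd_sum
  intro m _
  apply AnalyticOnNhd.mul analyticOnNhd_const
  unfold mono
  rw [← Finset.prod_fn]
  apply Finset.analyticOnNhd_prod
  intro i _
  exact ((EuclideanSpace.proj (𝕜 := ℝ) i).analyticOnNhd _).pow _


lemma isCompact_cube (h : ℝ) (a : Eu d) : IsCompact (cube d h a) := by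
  have : cube d h a =
      (PiLp.continuousLinearEquiv 2 ℝ (fun _ : Fin d => ℝ)).toHomeomorph ⁻¹'
        (Set.univ.pi fun i => Set.Icc (a i) (a i + h)) := by
    ext x
    simp only [Set.mem_preimage, Set.mem_univ_pi, Set.mem_Icc]
    rfl
  rw [this]
  rw [Homeomorph.isCompact_preimage]
  exact isCompact_univ_pi fun i => isCompact_Icc

lemma measurableSet_cube (h : ℝ) (a : Eu d) : MeasurableSet (cube d h a) :=
  (isCompact_cube h a).isClosed.measurableSet

def openCube (d : ℕ) : Set (Eu d) := {x | ∀ i, 0 < x i ∧ x i < 1}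

lemma isOpen_openCube : IsOpen (openCube d) := by
  have : openCube d = ⋂ i, ((fun x : Eu d => x i) ⁻¹' Set.Ioo 0 1) := by
    ext x; simp [openCube, Set.mem_Ioo]
  rw [this]
  exact isOpen_iInter_of_finite fun i =>
    ((isOpen_Ioo).preimage (EuclideanSpace.proj (𝕜 := ℝ) i).continuous)

lemma openCube_subset : openCube d ⊆ cube d 1 (0 : Eu d) := by
  intro x hx i
  have := hx i
  constructor
  · simpa using le_of_lt this.1
  · simpa using le_of_lt this.2

lemma center_mem_openCube : (WithLp.toLp 2 (fun _ => (1:ℝ)/2) : Eu d) ∈ openCube d := by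
  intro i; norm_num


lemma zero_mem_cube : (0 : Eu d) ∈ cube d 1 (0 : Eu d) := by
  intro i
  constructor
  · exact le_refl _
  · norm_num

lemma integrableOn_cube {f : Eu d → ℝ} (hf : Continuous f) (h : ℝ) (a : Eu d) :
    IntegrableOn f (cube d h a) :=
  hf.continuousOn.integrableOn_compact (isCompact_cube h a)

lemma pfun_smul (t : ℝ) (c : Idx d p → ℝ) (x : Eu d) : pfun (t • c) x = t * pfun c x := by
  unfold pfun
  rw [Finset.mul_sum]
  refine Finset.sum_congr rfl fun m _ => ?_
  simp [mul_assoc]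

lemma pos_integral (c : Idx d p → ℝ) (hc : c ≠ 0) :
    0 < ∫ z in cube d 1 (0 : Eu d), (pfun c z) ^ 2 := by
  have hex : ∃ x₀ ∈ openCube d, pfun c x₀ ≠ 0 := by
    by_contra hcon
    push_neg at hcon
    have hev : pfun c =ᶠ[nhds (WithLp.toLp 2 (fun _ => (1:ℝ)/2) : Eu d)] 0 :=
      Filter.eventuallyEq_of_mem (isOpen_openCube.mem_nhds center_mem_openCube) hcon
    have hEq := (analyticOnNhd_pfun c).eqOn_zero_of_preconnected_of_eventuallyEq_zero
      isPreconnected_univ (Set.mem_univ _) hev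
    exact hc (pfun_zero_of_eval_zero c fun x => hEq (Set.mem_univ x))
  obtain ⟨x₀, hx₀, hne⟩ := hex
  set ε := (pfun c x₀) ^ 2 with hεdef
  have hε : 0 < ε := lt_of_le_of_ne (sq_nonneg _) (Ne.symm (pow_ne_zero 2 hne))
  have hU : IsOpen (openCube d ∩ {x : Eu d | ε / 2 < (pfun c x) ^ 2}) :=
    isOpen_openCube.inter (isOpen_lt continuous_const ((continuous_pfun c).pow 2))
  have hx₀U : x₀ ∈ openCube d ∩ {x : Eu d | ε / 2 < (pfun c x) ^ 2} :=
    ⟨hx₀, by simpa [hεdef] using half_lt_self hε⟩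
  obtain ⟨r, hr, hball⟩ := Metric.isOpen_iff.mp hU x₀ hx₀U
  have hballK : Metric.ball x₀ r ⊆ cube d 1 (0 : Eu d) :=
    fun z hz => openCube_subset (hball hz).1
  have hvol : 0 < (volume (Metric.ball x₀ r)).toReal :=
    ENNReal.toReal_pos (Metric.measure_ball_pos volume x₀ hr).ne' measure_ball_lt_top.ne
  have hIK : IntegrableOn (fun z => (pfun c z) ^ 2) (cube d 1 (0 : Eu d)) :=
    integrableOn_cube ((continuous_pfun c).pow 2) 1 0
  have h1 : ε / 2 * (volume (Metric.ball x₀ r)).toReal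
      ≤ ∫ z in Metric.ball x₀ r, (pfun c z) ^ 2 := by
    refine setIntegral_ge_of_const_le_real measurableSet_ball measure_ball_lt_top.ne
      (fun x hx => le_of_lt (hball hx).2) (hIK.mono_set hballK)
  have h2 : ∫ z in Metric.ball x₀ r, (pfun c z) ^ 2
      ≤ ∫ z in cube d 1 (0 : Eu d), (pfun c z) ^ 2 := by
    refine setIntegral_mono_set hIK ?_ hballK.eventuallyLE
    exact Filter.Eventually.of_forall fun x => sq_nonneg _
  have : 0 < ε / 2 * (volume (Metric.ball x₀ r)).toReal := by positivity
  linarith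

lemma continuous_psi :
    Continuous (fun c : Idx d p → ℝ => ∫ z in cube d 1 (0 : Eu d), (pfun c z) ^ 2) := by
  have hrepr : ∀ c : Idx d p → ℝ, ∫ z in cube d 1 (0 : Eu d), (pfun c z) ^ 2
      = ∑ m : Idx d p, ∑ m' : Idx d p,
          (c m * c m') * ∫ z in cube d 1 (0 : Eu d), mono m z * mono m' z := by
    intro c
    have h1 : ∀ z : Eu d, (pfun c z) ^ 2
        = ∑ m : Idx d p, ∑ m' : Idx d p, (c m * c m') * (mono m z * mono m' z) := by
      intro z
      unfold pfun
      rw [sq, Finset.sum_mul_sum]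
      exact Finset.sum_congr rfl fun m _ => Finset.sum_congr rfl fun m' _ => by ring
    calc ∫ z in cube d 1 (0 : Eu d), (pfun c z) ^ 2
        = ∫ z in cube d 1 (0 : Eu d),
            ∑ m : Idx d p, ∑ m' : Idx d p, (c m * c m') * (mono m z * mono m' z) := by
          simp_rw [h1]
      _ = ∑ m : Idx d p, ∫ z in cube d 1 (0 : Eu d),
            ∑ m' : Idx d p, (c m * c m') * (mono m z * mono m' z) := by
          refine integral_finset_sum _ fun m _ => ?_
          refine integrable_finset_sum _ fun m' _ => ?_
          exact (integrableOn_cube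
            (continuous_const.mul ((continuous_mono m).mul (continuous_mono m'))) 1 0)
      _ = ∑ m : Idx d p, ∑ m' : Idx d p,
            ∫ z in cube d 1 (0 : Eu d), (c m * c m') * (mono m z * mono m' z) := by
          refine Finset.sum_congr rfl fun m _ => ?_
          refine integral_finset_sum _ fun m' _ => ?_
          exact (integrableOn_cube
            (continuous_const.mul ((continuous_mono m).mul (continuous_mono m'))) 1 0)
      _ = ∑ m : Idx d p, ∑ m' : Idx d p,
            (c m * c m') * ∫ z in cube d 1 (0 : Eu d), mono m z * mono m' z := by
          refine Finset.sum_congr rfl fun m _ => Finset.sum_congr rfl fun m' _ => ?_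
          exact integral_const_mul _ _
  have : (fun c : Idx d p → ℝ => ∫ z in cube d 1 (0 : Eu d), (pfun c z) ^ 2)
      = fun c : Idx d p → ℝ => ∑ m : Idx d p, ∑ m' : Idx d p,
          (c m * c m') * ∫ z in cube d 1 (0 : Eu d), mono m z * mono m' z := funext hrepr
  rw [this]
  refine continuous_finset_sum _ fun m _ => continuous_finset_sum _ fun m' _ => ?_
  exact ((continuous_apply m).mul (continuous_apply m')).mul continuous_const

set_option maxHeartbeats 1000000 in
lemma scalar_bound : ∃ C2 : ℝ, 0 < C2 ∧ ∀ c : Idx d p → ℝ, ∀ x ∈ cube d 1 (0 : Eu d),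
    (pfun c x) ^ 2 ≤ C2 * ∫ z in cube d 1 (0 : Eu d), (pfun c z) ^ 2 := by
  classical
  have hS : IsCompact (Metric.sphere (0 : Idx d p → ℝ) 1) := isCompact_sphere _ _
  have hSne : (Metric.sphere (0 : Idx d p → ℝ) 1).Nonempty :=
    NormedSpace.sphere_nonempty.mpr zero_le_one
  obtain ⟨w, hwS, hwmin'⟩ := hS.exists_isMinOn hSne continuous_psi.continuousOn
  have hwmin : ∀ u ∈ Metric.sphere (0 : Idx d p → ℝ) 1,
      (∫ z in cube d 1 (0 : Eu d), (pfun w z) ^ 2) ≤ ∫ z in cube d 1 (0 : Eu d), (pfun u z) ^ 2 :=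
    fun u hu => hwmin' hu
  set ε := ∫ z in cube d 1 (0 : Eu d), (pfun w z) ^ 2 with hεdef
  have hw0 : w ≠ 0 := by
    intro h0
    have := mem_sphere_zero_iff_norm.mp hwS
    rw [h0] at this
    simp at this
  have hεpos : 0 < ε := pos_integral w hw0
  have hprodC : IsCompact ((Metric.sphere (0 : Idx d p → ℝ) 1) ×ˢ cube d 1 (0 : Eu d)) :=
    hS.prod (isCompact_cube 1 0)
  have hprodne : ((Metric.sphere (0 : Idx d p → ℝ) 1) ×ˢ cube d 1 (0 : Eu d)).Nonempty :=
    ⟨(w, 0), Set.mk_mem_prod hwS zero_mem_cube⟩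
  have hcont : Continuous (fun q : (Idx d p → ℝ) × Eu d => (pfun q.1 q.2) ^ 2) := by
    have : Continuous (fun q : (Idx d p → ℝ) × Eu d => pfun q.1 q.2) := by
      unfold pfun
      exact continuous_finset_sum _ fun m _ =>
        ((continuous_apply m).comp continuous_fst).mul ((continuous_mono m).comp continuous_snd)
    exact this.pow 2
  obtain ⟨z₀, hz₀, hmax'⟩ := hprodC.exists_isMaxOn hprodne hcont.continuousOn
  have hmax : ∀ y ∈ (Metric.sphere (0 : Idx d p → ℝ) 1) ×ˢ cube d 1 (0 : Eu d),
      (pfun y.1 y.2) ^ 2 ≤ (pfun z₀.1 z₀.2) ^ 2 := fun y hy => hmax' hy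
  set M := (pfun z₀.1 z₀.2) ^ 2 with hMdef
  have hM : 0 ≤ M := sq_nonneg _
  refine ⟨M / ε + 1, by positivity, ?_⟩
  intro c x hx
  rcases eq_or_ne c 0 with rfl | hc
  · have h0 : pfun (0 : Idx d p → ℝ) = fun _ : Eu d => (0:ℝ) := by
      funext z; unfold pfun; simp
    rw [h0]
    simp
  · set u : Idx d p → ℝ := ‖c‖⁻¹ • c with hu
    have hcpos : 0 < ‖c‖ := norm_pos_iff.mpr hc
    have huS : u ∈ Metric.sphere (0 : Idx d p → ℝ) 1 := by
      rw [mem_sphere_zero_iff_norm, hu, norm_smul]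
      simp [abs_of_nonneg (inv_nonneg.mpr hcpos.le), inv_mul_cancel₀ hcpos.ne']
    have hcu : ∀ y : Eu d, pfun c y = ‖c‖ * pfun u y := by
      intro y
      rw [hu, pfun_smul]
      field_simp
    have h1 : (pfun u x) ^ 2 ≤ M := hmax (u, x) (Set.mk_mem_prod huS hx)
    have h2 : ε ≤ ∫ z in cube d 1 (0 : Eu d), (pfun u z) ^ 2 := hwmin u huS
    have hIu : 0 ≤ ∫ z in cube d 1 (0 : Eu d), (pfun u z) ^ 2 :=
      le_trans hεpos.le h2
    have hint : ∫ z in cube d 1 (0 : Eu d), (pfun c z) ^ 2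
        = ‖c‖ ^ 2 * ∫ z in cube d 1 (0 : Eu d), (pfun u z) ^ 2 := by
      rw [← integral_const_mul]
      refine setIntegral_congr_fun (measurableSet_cube 1 0) fun z _ => ?_
      rw [hcu z]
      ring
    rw [hint, hcu x]
    have key : (pfun u x) ^ 2 ≤ (M / ε + 1) * ∫ z in cube d 1 (0 : Eu d), (pfun u z) ^ 2 := by
      have hMe : M = M / ε * ε := by field_simp
      calc (pfun u x) ^ 2 ≤ M := h1
        _ = M / ε * ε := hMe
        _ ≤ M / ε * ∫ z in cube d 1 (0 : Eu d), (pfun u z) ^ 2 :=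
            mul_le_mul_of_nonneg_left h2 (div_nonneg hM hεpos.le)
        _ ≤ (M / ε + 1) * ∫ z in cube d 1 (0 : Eu d), (pfun u z) ^ 2 := by
            have hring : (M / ε + 1) * (∫ z in cube d 1 (0 : Eu d), (pfun u z) ^ 2)
                - M / ε * ∫ z in cube d 1 (0 : Eu d), (pfun u z) ^ 2
                = ∫ z in cube d 1 (0 : Eu d), (pfun u z) ^ 2 := by ring
            linarith
    calc (‖c‖ * pfun u x) ^ 2 = ‖c‖ ^ 2 * (pfun u x) ^ 2 := by ring
      _ ≤ ‖c‖ ^ 2 * ((M / ε + 1) * ∫ z in cube d 1 (0 : Eu d), (pfun u z) ^ 2) :=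
          mul_le_mul_of_nonneg_left key (sq_nonneg _)
      _ = (M / ε + 1) * (‖c‖ ^ 2 * ∫ z in cube d 1 (0 : Eu d), (pfun u z) ^ 2) := by ring

-- (b) representation
lemma exists_rep {q : Eu d → ℝ} (hq : IsQp d p q) : ∃ c : Idx d p → ℝ, q = pfun c := by
  classical
  obtain ⟨P, hdeg, heval⟩ := hq
  refine ⟨fun m => P.coeff (emb m), ?_⟩
  funext x
  rw [heval x, MvPolynomial.eval_eq']
  unfold pfun mono
  have himg : ∑ m : Idx d p, P.coeff (emb m) * ∏ i, x i ^ (m i : ℕ)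
      = ∑ s ∈ Finset.univ.image (emb (d := d) (p := p)), P.coeff s * ∏ i, x i ^ s i := by
    rw [Finset.sum_image (fun m _ m' _ h => emb_injective h)]
    exact Finset.sum_congr rfl fun m _ => rfl
  rw [himg]
  refine Finset.sum_subset ?_ ?_
  · intro m hm
    refine Finset.mem_image.mpr ⟨fun i => ⟨m i, ?_⟩, Finset.mem_univ _, ?_⟩
    · exact lt_of_le_of_lt (le_of_le_of_eq (MvPolynomial.monomial_le_degreeOf i hm) rfl)
        (Nat.lt_succ_of_le (hdeg i))
    · ext i
      rw [emb_apply]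
  · intro s _ hs
    rw [MvPolynomial.notMem_support_iff.mp hs, zero_mul]

-- (c) affine closure
lemma isQp_affine {q : Eu d → ℝ} (hq : IsQp d p q) (a : Eu d) (h : ℝ) :
    IsQp d p (fun y => q (a + h • y)) := by
  classical
  obtain ⟨P, hdeg, heval⟩ := hq
  set g : Fin d → MvPolynomial (Fin d) ℝ :=
    fun i => MvPolynomial.C (a i) + MvPolynomial.C h * MvPolynomial.X i with hg
  have hgdeg : ∀ i j : Fin d, (g i).degreeOf j ≤ if i = j then 1 else 0 := by
    intro i j
    refine le_trans (MvPolynomial.degreeOf_add_le _ _ _) ?_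
    rw [MvPolynomial.degreeOf_C]
    refine max_le (Nat.zero_le _) ?_
    refine le_trans (MvPolynomial.degreeOf_C_mul_le _ _ _) ?_
    rw [MvPolynomial.degreeOf_X]
    split <;> simp_all
  refine ⟨MvPolynomial.bind₁ g P, ?_, ?_⟩
  · intro j
    have hrep : MvPolynomial.bind₁ g P
        = ∑ m ∈ P.support, MvPolynomial.C (P.coeff m) * m.prod (fun i k => (g i) ^ k) := by
      conv_lhs => rw [P.as_sum]
      rw [map_sum]
      refine Finset.sum_congr rfl fun m _ => ?_
      rw [MvPolynomial.bind₁_monomial, Finsupp.prod]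
    rw [hrep]
    refine le_trans (MvPolynomial.degreeOf_sum_le _ _ _) ?_
    refine Finset.sup_le fun m hm => ?_
    refine le_trans (MvPolynomial.degreeOf_mul_le _ _ _) ?_
    rw [MvPolynomial.degreeOf_C, zero_add]
    rw [Finsupp.prod]
    refine le_trans (MvPolynomial.degreeOf_prod_le _ _ _) ?_
    have hterm : ∀ i ∈ m.support, ((g i) ^ m i).degreeOf j ≤ m i * (if i = j then 1 else 0) := by
      intro i _
      refine le_trans (MvPolynomial.degreeOf_pow_le _ _ _) ?_
      exact Nat.mul_le_mul_left _ (hgdeg i j)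
    refine le_trans (Finset.sum_le_sum hterm) ?_
    have hsum : ∑ i ∈ m.support, m i * (if i = j then 1 else 0) ≤ m j := by
      have heach : ∀ i ∈ m.support, m i * (if i = j then 1 else 0)
          = if i = j then m j else 0 := by
        intro i _
        by_cases hij : i = j <;> simp [hij]
      rw [Finset.sum_congr rfl heach, Finset.sum_ite_eq' m.support j (fun _ => m j)]
      split <;> simp
    exact le_trans hsum (le_trans (MvPolynomial.monomial_le_degreeOf j hm) (hdeg j))
  · intro x
    have h1 : MvPolynomial.eval (fun i => x i) (MvPolynomial.bind₁ g P)
        = MvPolynomial.eval (fun i => MvPolynomial.eval (fun j => x j) (g i)) P :=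
      MvPolynomial.eval₂Hom_bind₁ (RingHom.id ℝ) _ g P
    show q (a + h • x) = _
    rw [h1, heval (a + h • x)]
    have h2 : (fun i => (a + h • x) i) = fun i => MvPolynomial.eval (fun j : Fin d => x j) (g i) := by
      funext i
      have h3 : (a + h • x) i = a i + h * x i := rfl
      rw [h3, hg]
      simp
    rw [h2]

-- (d) change of variables
lemma mem_cube_iff {h : ℝ} {a x : Eu d} : x ∈ cube d h a ↔ ∀ i, a i ≤ x i ∧ x i ≤ a i + h :=
  Iff.rfl

lemma cov {h : ℝ} (hh : 0 < h) (a : Eu d) (F : Eu d → ℝ) :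
    ∫ x in cube d h a, F x = h ^ d * ∫ y in cube d 1 (0 : Eu d), F (a + h • y) := by
  rw [← integral_indicator (measurableSet_cube h a)]
  have step1 : ∫ x, Set.indicator (cube d h a) F x
      = ∫ x, Set.indicator (cube d h a) F (a + x) :=
    (integral_add_left_eq_self _ a).symm
  rw [step1]
  have step2 : (fun x => Set.indicator (cube d h a) F (a + x))
      = fun x => Set.indicator (cube d h 0) (fun z => F (a + z)) x := by
    funext x
    have hmem : a + x ∈ cube d h a ↔ x ∈ cube d h (0 : Eu d) := by
      constructor <;> intro hx i <;> have h1 := hx i <;>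
        have h2 : (a + x) i = a i + x i := rfl <;>
        have h3 : (0 : Eu d) i = 0 := rfl
      · rw [h2] at h1
        rw [h3]
        constructor <;> linarith [h1.1, h1.2]
      · rw [h3] at h1
        rw [h2]
        constructor <;> linarith [h1.1, h1.2]
    by_cases hx : x ∈ cube d h (0 : Eu d)
    · rw [Set.indicator_of_mem (hmem.mpr hx), Set.indicator_of_mem hx]
    · rw [Set.indicator_of_notMem (fun hc => hx (hmem.mp hc)),
        Set.indicator_of_notMem hx]
  rw [step2]
  have step3 : ∫ x, Set.indicator (cube d h 0) (fun z => F (a + z)) x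
      = h ^ d * ∫ y, Set.indicator (cube d h 0) (fun z => F (a + z)) (h • y) := by
    rw [MeasureTheory.Measure.integral_comp_smul_of_nonneg
      (volume : Measure (Eu d)) (Set.indicator (cube d h 0) (fun z => F (a + z))) h
      (hR := hh.le)]
    rw [finrank_euclideanSpace_fin, smul_eq_mul, ← mul_assoc,
      mul_inv_cancel₀ (by positivity), one_mul]
  rw [step3]
  congr 1
  have step4 : (fun y => Set.indicator (cube d h 0) (fun z => F (a + z)) (h • y))
      = fun y => Set.indicator (cube d 1 (0 : Eu d)) (fun y => F (a + h • y)) y := by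
    funext y
    have hmem : h • y ∈ cube d h (0 : Eu d) ↔ y ∈ cube d 1 (0 : Eu d) := by
      constructor <;> intro hy i <;> have h1 := hy i <;>
        have h2 : (h • y) i = h * y i := rfl <;>
        have h3 : (0 : Eu d) i = 0 := rfl <;> rw [h3] at h1 ⊢ <;> simp only [zero_add] at h1 ⊢
      · rw [h2] at h1
        constructor
        · exact nonneg_of_mul_nonneg_right h1.1 hh
        · nlinarith [h1.2]
      · rw [h2]
        constructor
        · exact mul_nonneg hh.le h1.1
        · nlinarith [h1.2]
    by_cases hy : y ∈ cube d 1 (0 : Eu d)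
    · rw [Set.indicator_of_mem (hmem.mpr hy), Set.indicator_of_mem hy]
    · rw [Set.indicator_of_notMem (fun hc => hy (hmem.mp hc)), Set.indicator_of_notMem hy]
  rw [step4, integral_indicator (measurableSet_cube 1 0)]

lemma differentiable_pfun (c : Idx d p → ℝ) : Differentiable ℝ (pfun c) :=
  fun x => (hasFDerivAt_pfun c x).differentiableAt

lemma fderiv_pfun_single (c : Idx d p → ℝ) (x : Eu d) (i : Fin d) :
    fderiv ℝ (pfun c) x (EuclideanSpace.single i (1 : ℝ)) = pfun (dcoef i c) x := by
  rw [(hasFDerivAt_pfun c x).fderiv, ContinuousLinearMap.sum_apply]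
  simp_rw [ContinuousLinearMap.smul_apply, Dmono_apply_single, smul_eq_mul]
  exact (sum_dcoef_eq i c x).symm

lemma gradsq (c : Idx d p → ℝ) (x : Eu d) :
    ‖fderiv ℝ (pfun c) x‖ ^ 2 = ∑ i, (pfun (dcoef i c) x) ^ 2 := by
  rw [norm_clm_sq]
  exact Finset.sum_congr rfl fun i _ => by rw [fderiv_pfun_single]

lemma continuous_gradsq (c : Idx d p → ℝ) :
    Continuous (fun x : Eu d => ‖fderiv ℝ (pfun c) x‖ ^ 2) := by
  have : (fun x : Eu d => ‖fderiv ℝ (pfun c) x‖ ^ 2)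
      = fun x => ∑ i, (pfun (dcoef i c) x) ^ 2 := funext fun x => gradsq c x
  rw [this]
  exact continuous_finset_sum _ fun i _ => (continuous_pfun _).pow 2

lemma master : ∃ C1 : ℝ, 0 < C1 ∧ ∀ c : Idx d p → ℝ, ∀ x ∈ cube d 1 (0 : Eu d),
    ‖fderiv ℝ (pfun c) x‖ ^ 2 ≤ C1 * ∫ z in cube d 1 (0 : Eu d), ‖fderiv ℝ (pfun c) z‖ ^ 2 := by
  obtain ⟨C2, hC2, hbound⟩ := scalar_bound (d := d) (p := p)
  refine ⟨C2, hC2, ?_⟩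
  intro c x hx
  have hint : ∫ z in cube d 1 (0 : Eu d), ‖fderiv ℝ (pfun c) z‖ ^ 2
      = ∑ i, ∫ z in cube d 1 (0 : Eu d), (pfun (dcoef i c) z) ^ 2 := by
    rw [← integral_finset_sum]
    · exact setIntegral_congr_fun (measurableSet_cube 1 0) fun z _ => gradsq c z
    · exact fun i _ => integrableOn_cube ((continuous_pfun _).pow 2) 1 0
  rw [gradsq, hint, Finset.mul_sum]
  exact Finset.sum_le_sum fun i _ => hbound (dcoef i c) x hx


end S3

open S3 in
/-- Elementwise boundary inverse inequality:
`h ∫_Γ ‖∇q‖² dH^{d-1} ≤ C ∫_T ‖∇q‖² dx` whenever `Γ ⊆ T` has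
`(d-1)`-dimensional Hausdorff measure at most `C₀ h^{d-1}`. -/
theorem statement3 (d p : ℕ) (hd : 1 ≤ d) (C₀ : ℝ) (hC₀ : 0 < C₀) :
    ∃ C : ℝ, 0 < C ∧ ∀ h : ℝ, 0 < h → ∀ a : EuclideanSpace ℝ (Fin d),
      ∀ Γ : Set (EuclideanSpace ℝ (Fin d)), MeasurableSet Γ → Γ ⊆ cube d h a →
        μH[((d : ℝ) - 1)] Γ ≤ ENNReal.ofReal (C₀ * h ^ (d - 1)) →
        ∀ q : EuclideanSpace ℝ (Fin d) → ℝ, IsQp d p q →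
          h * ∫ x in Γ, ‖fderiv ℝ q x‖ ^ 2 ∂μH[((d : ℝ) - 1)] ≤
            C * ∫ x in cube d h a, ‖fderiv ℝ q x‖ ^ 2 := by
  obtain ⟨C1, hC1, hmaster⟩ := master (d := d) (p := p)
  refine ⟨C1 * C₀, by positivity, ?_⟩
  intro h hh a Γ hΓm hΓsub hΓH q hq
  obtain ⟨c, hc⟩ := exists_rep hq
  obtain ⟨cs, hcs⟩ := exists_rep (isQp_affine hq a h)
  set I := ∫ x in cube d h a, ‖fderiv ℝ q x‖ ^ 2 with hI
  have hI0 : 0 ≤ I := setIntegral_nonneg (measurableSet_cube h a) fun x _ => by positivity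
  -- chain rule
  have hgrad : ∀ y : Eu d, fderiv ℝ (pfun cs) y = h • fderiv ℝ q (a + h • y) := by
    intro y
    have hinner : HasFDerivAt (fun y : Eu d => a + h • y)
        (h • ContinuousLinearMap.id ℝ (Eu d)) y :=
      ((hasFDerivAt_id y).const_smul h).const_add a
    have hqd : HasFDerivAt q (fderiv ℝ q (a + h • y)) (a + h • y) := by
      rw [hc]
      exact (differentiable_pfun c).differentiableAt.hasFDerivAt
    have hcomp := hqd.comp y hinner
    have heqf : (fun y : Eu d => q (a + h • y)) = pfun cs := hcs ▸ rfl
    have : HasFDerivAt (pfun cs)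
        ((fderiv ℝ q (a + h • y)).comp (h • ContinuousLinearMap.id ℝ (Eu d))) y := by
      rw [← heqf]
      exact hcomp
    rw [this.fderiv]
    ext v
    simp
  have hnorm : ∀ y : Eu d, ‖fderiv ℝ (pfun cs) y‖ ^ 2 = h ^ 2 * ‖fderiv ℝ q (a + h • y)‖ ^ 2 := by
    intro y
    rw [hgrad y, norm_smul, Real.norm_eq_abs, abs_of_pos hh]
    ring
  -- integral over unit cube of scaled gradient
  have hIK : ∫ z in cube d 1 (0 : Eu d), ‖fderiv ℝ (pfun cs) z‖ ^ 2
      = h ^ 2 * ((h ^ d)⁻¹ * I) := by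
    have hcov := cov hh a (fun w => ‖fderiv ℝ q w‖ ^ 2)
    have h2 : ∫ z in cube d 1 (0 : Eu d), ‖fderiv ℝ (pfun cs) z‖ ^ 2
        = h ^ 2 * ∫ z in cube d 1 (0 : Eu d), ‖fderiv ℝ q (a + h • z)‖ ^ 2 := by
      rw [← integral_const_mul]
      exact setIntegral_congr_fun (measurableSet_cube 1 0) fun z _ => hnorm z
    rw [h2]
    congr 1
    have hpd : (0:ℝ) < h ^ d := by positivity
    rw [hI]
    rw [hcov]
    field_simp
  -- pointwise bound on the cube
  have hsup : ∀ x ∈ cube d h a, ‖fderiv ℝ q x‖ ^ 2 ≤ C1 * ((h ^ d)⁻¹ * I) := by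
    intro x hx
    set y : Eu d := h⁻¹ • (x - a) with hy
    have hxy : a + h • y = x := by
      rw [hy, smul_smul, mul_inv_cancel₀ hh.ne', one_smul]
      abel
    have hyK : y ∈ cube d 1 (0 : Eu d) := by
      intro i
      have hyi : y i = h⁻¹ * (x i - a i) := rfl
      have h0i : (0 : Eu d) i = 0 := rfl
      have hxi := hx i
      rw [hyi, h0i]
      constructor
      · have : 0 ≤ x i - a i := by linarith [hxi.1]
        positivity
      · have h1 : x i - a i ≤ h := by linarith [hxi.2]
        rw [zero_add]
        calc h⁻¹ * (x i - a i) ≤ h⁻¹ * h :=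
              mul_le_mul_of_nonneg_left h1 (inv_nonneg.mpr hh.le)
          _ = 1 := inv_mul_cancel₀ hh.ne'
    have h1 := hmaster cs y hyK
    rw [hIK, hnorm y, hxy] at h1
    have hh2 : (0:ℝ) < h ^ 2 := by positivity
    have h3 : C1 * (h ^ 2 * ((h ^ d)⁻¹ * I)) = h ^ 2 * (C1 * ((h ^ d)⁻¹ * I)) := by ring
    rw [h3] at h1
    exact le_of_mul_le_mul_left h1 hh2
  -- measure bound
  have hμfin : μH[((d : ℝ) - 1)] Γ < ⊤ := lt_of_le_of_lt hΓH ENNReal.ofReal_lt_top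
  have hMnn : 0 ≤ C1 * ((h ^ d)⁻¹ * I) := by positivity
  have hbnd : ∫ x in Γ, ‖fderiv ℝ q x‖ ^ 2 ∂μH[((d : ℝ) - 1)]
      ≤ C1 * ((h ^ d)⁻¹ * I) * (μH[((d : ℝ) - 1)] Γ).toReal := by
    have hnormle : ∀ x ∈ Γ, ‖‖fderiv ℝ q x‖ ^ 2‖ ≤ C1 * ((h ^ d)⁻¹ * I) := by
      intro x hx
      rw [Real.norm_eq_abs, abs_of_nonneg (by positivity)]
      exact hsup x (hΓsub hx)
    calc ∫ x in Γ, ‖fderiv ℝ q x‖ ^ 2 ∂μH[((d : ℝ) - 1)]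
        ≤ ‖∫ x in Γ, ‖fderiv ℝ q x‖ ^ 2 ∂μH[((d : ℝ) - 1)]‖ := le_abs_self _
      _ ≤ C1 * ((h ^ d)⁻¹ * I) * (μH[((d : ℝ) - 1)] Γ).toReal :=
          norm_setIntegral_le_of_norm_le_const hμfin hnormle
  have htr : (μH[((d : ℝ) - 1)] Γ).toReal ≤ C₀ * h ^ (d - 1) :=
    ENNReal.toReal_le_of_le_ofReal (by positivity) hΓH
  have hfinal : h * ∫ x in Γ, ‖fderiv ℝ q x‖ ^ 2 ∂μH[((d : ℝ) - 1)]
      ≤ h * (C1 * ((h ^ d)⁻¹ * I) * (C₀ * h ^ (d - 1))) := by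
    refine mul_le_mul_of_nonneg_left ?_ hh.le
    exact le_trans hbnd (mul_le_mul_of_nonneg_left htr hMnn)
  refine le_trans hfinal ?_
  have hpow : h ^ d = h * h ^ (d - 1) := by
    rw [← pow_succ']
    congr 1
    omega
  have heq : h * (C1 * ((h ^ d)⁻¹ * I) * (C₀ * h ^ (d - 1))) = C1 * C₀ * I := by
    rw [hpow]
    have hne : h ^ (d-1) ≠ 0 := by positivity
    field_simp
  rw [heq]
end
end
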